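/- Let F₀(ℕ) = {f ∈ l∞(ℕ) : AE(f) = 0 and f(ℕ) is a finite set}. Then the character space E₀(ℕ) of E₀ is totally disconnected if and only if E₀ equals the closure of F₀(ℕ) in l∞(ℕ) with respect to the supremum norm. -/

import Mathlib

open Filter Set Topology

namespace Anqie

variable {X : Type*} [TopologicalSpace X]

/-- `𝒰` is an open cover of `X`. -/
def IsOpenCover (𝒰 : Set (Set X)) : Prop :=
  (∀ U ∈ 𝒰, IsOpen U) ∧ ⋃₀ 𝒰 = Set.univ

/-- The common refinement `𝒰 ∨ T⁻¹ 𝒰 ∨ ⋯ ∨ T^{-(n-1)} 𝒰`. -/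
def iterJoin (T : X → X) (𝒰 : Set (Set X)) (n : ℕ) : Set (Set X) :=
  {V | ∃ u : Fin n → Set X, (∀ j, u j ∈ 𝒰) ∧ V = ⋂ j : Fin n, T^[(j : ℕ)] ⁻¹' u j}

/-- The minimal cardinality of a finite subcover of `𝒱` (junk value `0` if none exists). -/
noncomputable def coverNum (𝒱 : Set (Set X)) : ℕ :=
  sInf {k | ∃ F : Finset (Set X), (↑F : Set (Set X)) ⊆ 𝒱 ∧
    ⋃₀ (↑F : Set (Set X)) = Set.univ ∧ F.card = k}

/-- The Adler–Konheim–McAndrew entropy of `T` relative to the open cover `𝒰`. -/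
noncomputable def coverEntropy (T : X → X) (𝒰 : Set (Set X)) : EReal :=
  Filter.atTop.limsup fun n : ℕ =>
    ((Real.log (coverNum (iterJoin T 𝒰 n)) / n : ℝ) : EReal)

/-- The Adler–Konheim–McAndrew topological entropy of `T`, via open covers. -/
noncomputable def entropy (T : X → X) : EReal :=
  ⨆ 𝒰 ∈ {𝒰 : Set (Set X) | IsOpenCover 𝒰}, coverEntropy T 𝒰

/-- The set of forward-orbit sequences of `f : ℕ → X` inside `X^ℕ`. -/
def orbitSet (f : ℕ → X) : Set (ℕ → X) :=
  {ω | ∃ n : ℕ, ∀ k : ℕ, ω k = f (n + k)}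

/-- `X_f`, the closure of the set of orbit sequences in the product topology. -/
def orbitClosure (f : ℕ → X) : Set (ℕ → X) := closure (orbitSet f)

lemma shift_mem_orbitClosure (f : ℕ → X) {ω : ℕ → X} (hω : ω ∈ orbitClosure f) :
    (fun k => ω (k + 1)) ∈ orbitClosure f := by
  have hcont : Continuous fun ω : ℕ → X => fun k => ω (k + 1) :=
    continuous_pi fun k => continuous_apply (k + 1)
  have hmaps : MapsTo (fun ω : ℕ → X => fun k => ω (k + 1)) (orbitSet f) (orbitSet f) := by
    rintro ω ⟨n, hn⟩
    refine ⟨n + 1, fun k => ?_⟩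
    show ω (k + 1) = f (n + 1 + k)
    rw [hn (k + 1)]; congr 1; omega
  exact map_mem_closure hcont hω hmaps

/-- `B_f`, the left shift restricted to `X_f`. -/
def shiftOn (f : ℕ → X) : orbitClosure f → orbitClosure f :=
  fun ω => ⟨fun k => (ω : ℕ → X) (k + 1), shift_mem_orbitClosure f ω.2⟩

/-- The anqie entropy of a map `f : ℕ → X`: the AKM topological entropy of the
left shift on `X_f`. -/
noncomputable def AE (f : ℕ → X) : EReal := entropy (shiftOn f)

end Anqie

namespace Anqie

/-- The elements of `E₀`: bounded arithmetic functions with zero anqie entropy. -/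
abbrev E0sub : Type := {f : BoundedContinuousFunction ℕ ℂ // AE ⇑f = 0}

/-- The character space (maximal ideal space) `E₀(ℕ)` of the commutative unital
C*-algebra `E₀`: nonzero multiplicative linear functionals on `E₀`, as a subset of
`E₀ → ℂ` with the topology of pointwise (weak*) convergence. -/
def CharSpace : Set (E0sub → ℂ) :=
  {φ | (∃ f, φ f ≠ 0) ∧
    (∀ f g h : E0sub, (h : BoundedContinuousFunction ℕ ℂ) =
      (f : BoundedContinuousFunction ℕ ℂ) + g → φ h = φ f + φ g) ∧
    (∀ (c : ℂ) (f g : E0sub), (g : BoundedContinuousFunction ℕ ℂ) =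
      c • (f : BoundedContinuousFunction ℕ ℂ) → φ g = c * φ f) ∧
    (∀ f g h : E0sub, (h : BoundedContinuousFunction ℕ ℂ) =
      (f : BoundedContinuousFunction ℕ ℂ) * g → φ h = φ f * φ g)}

end Anqie
namespace Anqie

section Toolkit
set_option linter.unusedSectionVars false

variable {X : Type*} [TopologicalSpace X]

lemma coverNum_le {𝒱 : Set (Set X)} {F : Finset (Set X)} (hF : ↑F ⊆ 𝒱)
    (hc : ⋃₀ (↑F : Set (Set X)) = Set.univ) : coverNum 𝒱 ≤ F.card :=
  Nat.sInf_le ⟨F, hF, hc, rfl⟩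

lemma exists_subcover_of_coverNum [CompactSpace X] {𝒱 : Set (Set X)}
    (ho : ∀ V ∈ 𝒱, IsOpen V) (hc : ⋃₀ 𝒱 = Set.univ) :
    ∃ F : Finset (Set X), ↑F ⊆ 𝒱 ∧ ⋃₀ (↑F : Set (Set X)) = Set.univ ∧ F.card = coverNum 𝒱 := by
  have hcov : (Set.univ : Set X) ⊆ ⋃ V ∈ 𝒱, (id V : Set X) := by
    rw [← hc, Set.sUnion_eq_biUnion]; simp
  obtain ⟨b, hb𝒱, hbfin, hbcov⟩ :=
    IsCompact.elim_finite_subcover_image isCompact_univ (fun V hV => ho V hV) hcov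
  have hmem : coverNum 𝒱 ∈ {k | ∃ F : Finset (Set X), (↑F : Set (Set X)) ⊆ 𝒱 ∧
      ⋃₀ (↑F : Set (Set X)) = Set.univ ∧ F.card = k} := by
    apply Nat.sInf_mem
    refine ⟨hbfin.toFinset.card, hbfin.toFinset, ?_, ?_, rfl⟩
    · simpa using hb𝒱
    · apply Set.eq_univ_of_univ_subset
      intro x hx
      obtain ⟨V, hV, hxV⟩ := Set.mem_iUnion₂.1 (hbcov hx)
      exact ⟨V, by simpa using hV, hxV⟩
  obtain ⟨F, hF, hcF, hcard⟩ := hmem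
  exact ⟨F, hF, hcF, hcard⟩

/-- `𝒱` refines `𝒰`: every element of `𝒱` is contained in an element of `𝒰`. -/
def Refines (𝒱 𝒰 : Set (Set X)) : Prop := ∀ V ∈ 𝒱, ∃ U ∈ 𝒰, V ⊆ U

lemma Refines.iterJoin {𝒱 𝒰 : Set (Set X)} (h : Refines 𝒱 𝒰) (T : X → X) (n : ℕ) :
    Refines (iterJoin T 𝒱 n) (iterJoin T 𝒰 n) := by
  rintro V ⟨u, hu, rfl⟩
  choose U hU hUsub using fun j => h (u j) (hu j)
  exact ⟨⋂ j : Fin n, T^[(j : ℕ)] ⁻¹' U j, ⟨U, hU, rfl⟩,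
    Set.iInter_mono fun j => Set.preimage_mono (hUsub j)⟩

lemma coverNum_le_of_refines {𝒱 𝒰 : Set (Set X)} (h : Refines 𝒱 𝒰)
    {F : Finset (Set X)} (hF : ↑F ⊆ 𝒱) (hc : ⋃₀ (↑F : Set (Set X)) = Set.univ) :
    coverNum 𝒰 ≤ F.card := by
  classical
  have hch : ∀ V ∈ F, ∃ U ∈ 𝒰, V ⊆ U := fun V hV => h V (hF hV)
  choose! U hU hUsub using hch
  refine le_trans (coverNum_le (F := F.image U) ?_ ?_) (Finset.card_image_le)
  · intro W hW
    simp only [Finset.coe_image, Set.mem_image, Finset.mem_coe] at hW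
    obtain ⟨V, hV, rfl⟩ := hW
    exact hU V hV
  · apply Set.eq_univ_of_univ_subset
    intro x hx
    have : x ∈ ⋃₀ (↑F : Set (Set X)) := hc ▸ Set.mem_univ x
    obtain ⟨V, hVF, hxV⟩ := this
    exact ⟨U V, by simpa using ⟨V, hVF, rfl⟩, hUsub V hVF hxV⟩

lemma IsOpenCover.iterJoin {𝒰 : Set (Set X)} (h : IsOpenCover 𝒰) {T : X → X}
    (hT : Continuous T) (n : ℕ) : IsOpenCover (iterJoin T 𝒰 n) := by
  constructor
  · rintro V ⟨u, hu, rfl⟩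
    exact isOpen_iInter_of_finite fun j => (h.1 _ (hu j)).preimage (hT.iterate _)
  · apply Set.eq_univ_of_univ_subset
    intro x _
    have hx : ∀ j : Fin n, ∃ U ∈ 𝒰, T^[(j : ℕ)] x ∈ U := by
      intro j
      have := h.2 ▸ Set.mem_univ (T^[(j : ℕ)] x)
      obtain ⟨U, hU, hxU⟩ := this
      exact ⟨U, hU, hxU⟩
    choose u hu hxu using hx
    exact ⟨⋂ j : Fin n, T^[(j : ℕ)] ⁻¹' u j, ⟨u, hu, rfl⟩, Set.mem_iInter.2 hxu⟩

end Toolkit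

end Anqie
namespace Anqie
section Toolkit2
set_option linter.unusedSectionVars false
variable {X : Type*} [TopologicalSpace X]

lemma log_nat_mono {a b : ℕ} (h : a ≤ b) : Real.log a ≤ Real.log b := by
  rcases Nat.eq_zero_or_pos a with rfl | ha
  · simpa using Real.log_natCast_nonneg b
  · exact Real.log_le_log (by exact_mod_cast ha) (by exact_mod_cast h)

lemma log_div_nonneg (a n : ℕ) : (0:ℝ) ≤ Real.log a / n :=
  div_nonneg (Real.log_natCast_nonneg a) (Nat.cast_nonneg n)

lemma coverEntropy_nonneg (T : X → X) (𝒰 : Set (Set X)) : 0 ≤ coverEntropy T 𝒰 := by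
  rw [coverEntropy, Filter.limsup_eq]
  apply le_sInf
  intro a ha
  obtain ⟨n, hn⟩ := ha.exists
  refine le_trans ?_ hn
  exact_mod_cast log_div_nonneg _ n

lemma le_entropy {T : X → X} {𝒰 : Set (Set X)} (h : IsOpenCover 𝒰) :
    coverEntropy T 𝒰 ≤ entropy T := le_biSup _ h

lemma entropy_le {T : X → X} {c : EReal}
    (h : ∀ 𝒰 : Set (Set X), IsOpenCover 𝒰 → coverEntropy T 𝒰 ≤ c) : entropy T ≤ c :=
  iSup₂_le h

lemma isOpenCover_univ_singleton : IsOpenCover ({Set.univ} : Set (Set X)) :=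
  ⟨fun U hU => by simp at hU; subst hU; exact isOpen_univ, by simp⟩

lemma entropy_nonneg (T : X → X) : 0 ≤ entropy T :=
  le_trans (coverEntropy_nonneg T _) (le_entropy isOpenCover_univ_singleton)

lemma AE_nonneg {f : ℕ → X} : 0 ≤ AE f := entropy_nonneg _

lemma coverEntropy_mono [CompactSpace X] {T : X → X} (hT : Continuous T)
    {𝒱 𝒰 : Set (Set X)} (h𝒱 : IsOpenCover 𝒱) (h : Refines 𝒱 𝒰) :
    coverEntropy T 𝒰 ≤ coverEntropy T 𝒱 := by
  refine Filter.limsup_le_limsup (Filter.Eventually.of_forall ?_)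
    (Filter.isCobounded_le_of_bot) (Filter.isBounded_le_of_top)
  intro n
  have hcov := h𝒱.iterJoin hT n
  obtain ⟨F, hF, hFc, hFcard⟩ := exists_subcover_of_coverNum hcov.1 hcov.2
  have hle : coverNum (iterJoin T 𝒰 n) ≤ coverNum (iterJoin T 𝒱 n) :=
    hFcard ▸ coverNum_le_of_refines (h.iterJoin T n) hF hFc
  have : Real.log (coverNum (iterJoin T 𝒰 n)) / n ≤
      Real.log (coverNum (iterJoin T 𝒱 n)) / n := by
    rcases Nat.eq_zero_or_pos n with rfl | hn
    · simp
    · exact div_le_div_of_nonneg_right (log_nat_mono hle) (by positivity)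
  exact EReal.coe_le_coe_iff.2 this

end Toolkit2
end Anqie
namespace Anqie
section Factor
set_option linter.unusedSectionVars false
variable {Y Z : Type*} [TopologicalSpace Y] [TopologicalSpace Z]

lemma entropy_le_of_semiconj [CompactSpace Y] {π : Y → Z} (hπc : Continuous π)
    (hπs : Function.Surjective π) {T : Y → Y} {S : Z → Z} (hT : Continuous T)
    (hsemi : ∀ y, π (T y) = S (π y)) : entropy S ≤ entropy T := by
  apply entropy_le
  intro 𝒰 h𝒰
  set 𝒰' : Set (Set Y) := (fun U => π ⁻¹' U) '' 𝒰 with h𝒰'def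
  have h𝒰' : IsOpenCover 𝒰' := by
    constructor
    · rintro V ⟨U, hU, rfl⟩
      exact (h𝒰.1 U hU).preimage hπc
    · apply Set.eq_univ_of_univ_subset
      intro y _
      have : π y ∈ ⋃₀ 𝒰 := h𝒰.2 ▸ Set.mem_univ _
      obtain ⟨U, hU, hyU⟩ := this
      exact ⟨π ⁻¹' U, ⟨U, hU, rfl⟩, hyU⟩
  have hiter : ∀ j : ℕ, ∀ y, π (T^[j] y) = S^[j] (π y) := by
    intro j
    induction j with
    | zero => intro y; simp
    | succ j ih =>
      intro y
      rw [Function.iterate_succ_apply, Function.iterate_succ_apply, ih, hsemi]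
  refine le_trans ?_ (le_entropy h𝒰')
  refine Filter.limsup_le_limsup (Filter.Eventually.of_forall ?_)
    (Filter.isCobounded_le_of_bot) (Filter.isBounded_le_of_top)
  intro n
  have hcov := h𝒰'.iterJoin hT n
  obtain ⟨F, hF, hFc, hFcard⟩ := exists_subcover_of_coverNum hcov.1 hcov.2
  -- transport F to a subcover for S
  have hle : coverNum (iterJoin S 𝒰 n) ≤ coverNum (iterJoin T 𝒰' n) := by
    classical
    rw [← hFcard]
    have hch : ∀ V ∈ F, ∃ W ∈ iterJoin S 𝒰 n, V = π ⁻¹' W := by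
      intro V hV
      obtain ⟨u, hu, rfl⟩ := hF hV
      have hch2 : ∀ j : Fin n, ∃ U ∈ 𝒰, u j = π ⁻¹' U := by
        intro j
        obtain ⟨U, hU, hUe⟩ := hu j
        exact ⟨U, hU, hUe.symm⟩
      choose U hU hUe using hch2
      refine ⟨⋂ j : Fin n, S^[(j : ℕ)] ⁻¹' U j, ⟨U, hU, rfl⟩, ?_⟩
      rw [Set.preimage_iInter]
      apply Set.iInter_congr
      intro j
      rw [hUe j, ← Set.preimage_comp, ← Set.preimage_comp]
      have : π ∘ T^[(j:ℕ)] = S^[(j:ℕ)] ∘ π := funext fun y => hiter j y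
      rw [this]
    choose! W hW hWe using hch
    refine le_trans (coverNum_le (F := F.image W) ?_ ?_) (Finset.card_image_le)
    · intro V hV
      simp only [Finset.coe_image, Set.mem_image, Finset.mem_coe] at hV
      obtain ⟨V', hV', rfl⟩ := hV
      exact hW V' hV'
    · apply Set.eq_univ_of_univ_subset
      intro z _
      obtain ⟨y, rfl⟩ := hπs z
      have : y ∈ ⋃₀ (↑F : Set (Set Y)) := hFc ▸ Set.mem_univ y
      obtain ⟨V, hVF, hyV⟩ := this
      refine ⟨W V, by simpa using ⟨V, hVF, rfl⟩, ?_⟩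
      have := hWe V hVF ▸ hyV
      exact this
  have : Real.log (coverNum (iterJoin S 𝒰 n)) / n ≤
      Real.log (coverNum (iterJoin T 𝒰' n)) / n := by
    rcases Nat.eq_zero_or_pos n with rfl | hn
    · simp
    · exact div_le_div_of_nonneg_right (log_nat_mono hle) (by positivity)
  exact EReal.coe_le_coe_iff.2 this

lemma entropy_le_of_subsingleton [Subsingleton Y] (T : Y → Y) : entropy T ≤ 0 := by
  apply entropy_le
  intro 𝒰 h𝒰
  have hterm : ∀ n, ((Real.log (coverNum (iterJoin T 𝒰 n)) / n : ℝ) : EReal) ≤ 0 := by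
    intro n
    have h1 : coverNum (iterJoin T 𝒰 n) ≤ 1 := by
      rcases isEmpty_or_nonempty Y with hY | hY
      · refine le_trans (coverNum_le (F := ∅) (by simp) ?_) (by simp)
        simp [Set.eq_empty_of_isEmpty (Set.univ : Set Y)]
      · obtain ⟨y⟩ := hY
        have hcov : ∀ j : Fin n, ∃ U ∈ 𝒰, T^[(j:ℕ)] y ∈ U := by
          intro j
          have : T^[(j:ℕ)] y ∈ ⋃₀ 𝒰 := h𝒰.2 ▸ Set.mem_univ _
          obtain ⟨U, hU, h⟩ := this
          exact ⟨U, hU, h⟩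
        choose u hu hyu using hcov
        set V : Set Y := ⋂ j : Fin n, T^[(j:ℕ)] ⁻¹' u j with hV
        have hVuniv : V = Set.univ := by
          apply Set.eq_univ_of_univ_subset
          intro y' _
          have : y' = y := Subsingleton.elim _ _
          subst this
          exact Set.mem_iInter.2 hyu
        refine le_trans (coverNum_le (F := {V}) ?_ ?_) (by simp)
        · simp only [Finset.coe_singleton, Set.singleton_subset_iff]
          exact ⟨u, hu, rfl⟩
        · simp [hVuniv]
    have : Real.log (coverNum (iterJoin T 𝒰 n)) ≤ 0 := by
      calc Real.log (coverNum (iterJoin T 𝒰 n)) ≤ Real.log 1 := by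
            have := log_nat_mono h1; simpa using this
        _ = 0 := Real.log_one
    have h2 : Real.log (coverNum (iterJoin T 𝒰 n)) / n ≤ 0 :=
      div_nonpos_of_nonpos_of_nonneg this (Nat.cast_nonneg n)
    exact_mod_cast h2
  calc coverEntropy T 𝒰 ≤ Filter.limsup (fun _ : ℕ => (0 : EReal)) Filter.atTop :=
        Filter.limsup_le_limsup (Filter.Eventually.of_forall hterm)
          (Filter.isCobounded_le_of_bot) (Filter.isBounded_le_of_top)
    _ = 0 := Filter.limsup_const 0

end Factor
end Anqie
namespace Anqie
section Orbit
set_option linter.unusedSectionVars false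
variable {X Y : Type*} [TopologicalSpace X] [TopologicalSpace Y]

lemma continuous_shiftOn (f : ℕ → X) : Continuous (shiftOn f) := by
  apply Continuous.subtype_mk
  exact continuous_pi fun k => (continuous_apply (k + 1)).comp continuous_subtype_val

lemma shiftOn_iterate (f : ℕ → X) (j : ℕ) (ω : orbitClosure f) (k : ℕ) :
    (((shiftOn f)^[j] ω : orbitClosure f) : ℕ → X) k = (ω : ℕ → X) (k + j) := by
  induction j generalizing ω with
  | zero => rfl
  | succ j ih =>
    rw [Function.iterate_succ_apply]
    rw [ih (shiftOn f ω)]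
    show (ω : ℕ → X) ((k + j) + 1) = (ω : ℕ → X) (k + (j + 1))
    norm_num [Nat.add_assoc]

lemma isCompact_orbitClosure [T2Space X] {f : ℕ → X} {K : Set X} (hK : IsCompact K)
    (hf : ∀ n, f n ∈ K) : IsCompact (orbitClosure f) := by
  have hsub : orbitSet f ⊆ Set.univ.pi (fun _ : ℕ => K) := by
    rintro ω ⟨n, hn⟩ k _
    rw [hn k]; exact hf _
  have hcl : IsClosed (Set.univ.pi fun _ : ℕ => K) :=
    isClosed_set_pi fun i _ => hK.isClosed
  have hss : orbitClosure f ⊆ Set.univ.pi fun _ : ℕ => K :=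
    closure_minimal hsub hcl
  exact (isCompact_univ_pi fun _ => hK).of_isClosed_subset isClosed_closure hss

lemma AE_comp_le [T2Space X] [T2Space Y] {ψ : X → Y} (hψ : Continuous ψ)
    {f : ℕ → X} (hcomp : IsCompact (orbitClosure f)) :
    AE (fun n => ψ (f n)) ≤ AE f := by
  set g := fun n => ψ (f n) with hg
  set P : (ℕ → X) → (ℕ → Y) := fun ω => fun k => ψ (ω k) with hP
  have hPc : Continuous P := continuous_pi fun k => hψ.comp (continuous_apply k)
  have himg : P '' orbitClosure f = orbitClosure g := by
    apply Set.Subset.antisymm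
    · have h1 : P '' orbitSet f ⊆ orbitSet g := by
        rintro _ ⟨ω, ⟨n, hn⟩, rfl⟩
        exact ⟨n, fun k => by simp [hP, hg, hn k]⟩
      calc P '' orbitClosure f ⊆ closure (P '' orbitSet f) :=
            image_closure_subset_closure_image hPc
        _ ⊆ closure (orbitSet g) := closure_mono h1
    · have hcpt : IsCompact (P '' orbitClosure f) := hcomp.image hPc
      apply closure_minimal ?_ hcpt.isClosed
      rintro ω ⟨n, hn⟩
      refine ⟨fun k => f (n + k), subset_closure ⟨n, fun k => rfl⟩, ?_⟩
      funext k
      exact (hn k).symm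
  haveI : CompactSpace ↥(orbitClosure f) := isCompact_iff_compactSpace.mp hcomp
  set π : ↥(orbitClosure f) → ↥(orbitClosure g) :=
    fun ω => ⟨P ↑ω, by rw [← himg]; exact Set.mem_image_of_mem _ ω.2⟩ with hπ
  have hπc : Continuous π :=
    Continuous.subtype_mk (hPc.comp continuous_subtype_val) _
  have hπs : Function.Surjective π := by
    rintro ⟨z, hz⟩
    rw [← himg] at hz
    obtain ⟨ω, hω, hzω⟩ := hz
    exact ⟨⟨ω, hω⟩, Subtype.ext hzω⟩
  have hsemi : ∀ ω, π (shiftOn f ω) = shiftOn g (π ω) := by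
    intro ω
    apply Subtype.ext
    rfl
  exact entropy_le_of_semiconj hπc hπs (continuous_shiftOn f) hsemi

lemma orbitClosure_const [T1Space X] (x : X) :
    orbitClosure (fun _ : ℕ => x) = {fun _ : ℕ => x} := by
  have h1 : orbitSet (fun _ : ℕ => x) = {fun _ : ℕ => x} := by
    apply Set.Subset.antisymm
    · rintro ω ⟨n, hn⟩
      simp only [Set.mem_singleton_iff]
      funext k; exact hn k
    · rintro ω hω
      simp only [Set.mem_singleton_iff] at hω
      exact ⟨0, fun k => by rw [hω]⟩
  rw [orbitClosure, h1, closure_singleton]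

lemma AE_const [T1Space X] (x : X) : AE (fun _ : ℕ => x) = 0 := by
  refine le_antisymm ?_ AE_nonneg
  haveI : Subsingleton ↥(orbitClosure (fun _ : ℕ => x)) := by
    constructor
    rintro ⟨a, ha⟩ ⟨b, hb⟩
    rw [orbitClosure_const] at ha hb
    simp only [Set.mem_singleton_iff] at ha hb
    subst ha; subst hb; rfl
  exact entropy_le_of_subsingleton _

end Orbit
end Anqie
namespace Anqie
section Cyl
set_option linter.unusedSectionVars false
variable {M : Type*} [MetricSpace M]

/-- basic entourage extraction for the product uniformity on `ℕ → M`. -/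
lemma pi_entourage_basic {V : Set ((ℕ → M) × (ℕ → M))} (hV : V ∈ uniformity (ℕ → M)) :
    ∃ (m : ℕ) (δ : ℝ), 0 < δ ∧
      ∀ ω τ : ℕ → M, (∀ i < m, dist (ω i) (τ i) < δ) → (ω, τ) ∈ V := by
  classical
  rw [Pi.uniformity] at hV
  rw [Filter.mem_iInf] at hV
  obtain ⟨I, hIfin, W, hW, hVeq⟩ := hV
  have hW' : ∀ i : I, ∃ δ : ℝ, 0 < δ ∧
      ∀ ω τ : ℕ → M, dist (ω (i : ℕ)) (τ (i : ℕ)) < δ → (ω, τ) ∈ W i := by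
    intro i
    have := hW i
    rw [Filter.mem_comap] at this
    obtain ⟨E, hE, hEsub⟩ := this
    obtain ⟨δ, hδ, hδE⟩ := Metric.mem_uniformity_dist.1 hE
    exact ⟨δ, hδ, fun ω τ h => hEsub (hδE h)⟩
  choose δ hδpos hδ using hW'
  haveI : Finite I := hIfin
  haveI : Fintype I := Fintype.ofFinite I
  rcases isEmpty_or_nonempty I with hI | hI
  · refine ⟨0, 1, one_pos, fun ω τ _ => ?_⟩
    rw [hVeq]
    exact Set.mem_iInter.2 fun i => (hI.false i).elim
  · set δ₀ := Finset.univ.inf' (Finset.univ_nonempty) δ with hδ₀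
    set m := (Finset.univ.sup fun i : I => (i : ℕ)) + 1 with hm
    refine ⟨m, δ₀, ?_, ?_⟩
    · obtain ⟨i, _, hi⟩ := Finset.exists_mem_eq_inf' (Finset.univ_nonempty) δ
      rw [hδ₀, hi]; exact hδpos i
    · intro ω τ h
      rw [hVeq]
      refine Set.mem_iInter.2 fun i => ?_
      apply hδ i
      have h1 : (i : ℕ) < m :=
        Nat.lt_succ_of_le (Finset.le_sup (f := fun i : I => (i : ℕ)) (Finset.mem_univ i))
      have h2 : δ₀ ≤ δ i := Finset.inf'_le _ (Finset.mem_univ i)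
      exact lt_of_lt_of_le (h (i : ℕ) h1) h2

variable {f : ℕ → M}

/-- The cover of `X_f` by `ε`-balls in the zeroth coordinate. -/
def cylCover (f : ℕ → M) (ε : ℝ) : Set (Set ↥(orbitClosure f)) :=
  Set.range fun c : M => {ω : ↥(orbitClosure f) | dist ((ω : ℕ → M) 0) c < ε}

/-- Cylinder sets of length `n` and radius `ε`. -/
def cylSet (f : ℕ → M) (ε : ℝ) {n : ℕ} (c : Fin n → M) : Set ↥(orbitClosure f) :=
  {ω : ↥(orbitClosure f) | ∀ j : Fin n, dist ((ω : ℕ → M) (j : ℕ)) (c j) < ε}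

lemma isOpenCover_cylCover {ε : ℝ} (hε : 0 < ε) : IsOpenCover (cylCover f ε) := by
  constructor
  · rintro U ⟨c, rfl⟩
    have : Continuous fun ω : ↥(orbitClosure f) => dist ((ω : ℕ → M) 0) c :=
      (Continuous.dist ((continuous_apply 0).comp continuous_subtype_val) continuous_const)
    exact isOpen_lt this continuous_const
  · apply Set.eq_univ_of_univ_subset
    intro ω _
    exact ⟨_, ⟨(ω : ℕ → M) 0, rfl⟩, by simp [hε]⟩

lemma cylSet_mem_iterJoin (ε : ℝ) {n : ℕ} (c : Fin n → M) :
    cylSet f ε c ∈ iterJoin (shiftOn f) (cylCover f ε) n := by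
  refine ⟨fun j => {ω : ↥(orbitClosure f) | dist ((ω : ℕ → M) 0) (c j) < ε},
    fun j => ⟨c j, rfl⟩, ?_⟩
  ext ω
  simp only [cylSet, Set.mem_setOf_eq, Set.mem_iInter, Set.mem_preimage]
  apply forall_congr'
  intro j
  rw [shiftOn_iterate]
  simp

lemma iterJoin_cylCover_eq (ε : ℝ) (n : ℕ) {V : Set ↥(orbitClosure f)}
    (hV : V ∈ iterJoin (shiftOn f) (cylCover f ε) n) :
    ∃ c : Fin n → M, V = cylSet f ε c := by
  obtain ⟨u, hu, rfl⟩ := hV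
  choose c hc using fun j => hu j
  refine ⟨c, ?_⟩
  ext ω
  simp only [Set.mem_iInter, Set.mem_preimage, cylSet, Set.mem_setOf_eq]
  apply forall_congr'
  intro j
  rw [← hc j]
  simp only [Set.mem_setOf_eq]
  rw [shiftOn_iterate]
  simp

lemma exists_cyl_refinement (hcomp : IsCompact (orbitClosure f))
    (hne : (orbitClosure f).Nonempty)
    {𝒰 : Set (Set ↥(orbitClosure f))} (h𝒰 : IsOpenCover 𝒰) :
    ∃ (ε : ℝ) (m : ℕ), 0 < ε ∧ 0 < m ∧
      Refines (iterJoin (shiftOn f) (cylCover f ε) m) 𝒰 := by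
  classical
  -- ambient opens
  have hopen : ∀ U ∈ 𝒰, ∃ t : Set (ℕ → M), IsOpen t ∧ Subtype.val ⁻¹' t = U := by
    intro U hU
    exact isOpen_induced_iff.1 (h𝒰.1 U hU)
  choose! hat hhatopen hhatpre using hopen
  have h𝒰ne : 𝒰.Nonempty := by
    obtain ⟨x, hx⟩ := hne
    have : (⟨x, hx⟩ : ↥(orbitClosure f)) ∈ ⋃₀ 𝒰 := h𝒰.2 ▸ Set.mem_univ _
    obtain ⟨U, hU, _⟩ := this
    exact ⟨U, hU⟩
  · have hcover : orbitClosure f ⊆ ⋃₀ (hat '' 𝒰) := by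
      intro x hx
      have : (⟨x, hx⟩ : ↥(orbitClosure f)) ∈ ⋃₀ 𝒰 := h𝒰.2 ▸ Set.mem_univ _
      obtain ⟨U, hU, hxU⟩ := this
      refine ⟨hat U, ⟨U, hU, rfl⟩, ?_⟩
      have := hhatpre U hU
      rw [← this] at hxU
      exact hxU
    obtain ⟨V, hV, hball⟩ := lebesgue_number_lemma_sUnion hcomp
      (by rintro s ⟨U, hU, rfl⟩; exact hhatopen U hU) hcover
    obtain ⟨m, δ, hδ, hVδ⟩ := pi_entourage_basic hV
    refine ⟨δ / 2, max m 1, half_pos hδ, by omega, ?_⟩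
    intro W hW
    obtain ⟨c, rfl⟩ := iterJoin_cylCover_eq _ _ hW
    rcases Set.eq_empty_or_nonempty (cylSet f (δ/2) c) with he | ⟨ω₀, hω₀⟩
    · obtain ⟨U, hU⟩ := h𝒰ne
      exact ⟨U, hU, by rw [he]; exact Set.empty_subset U⟩
    · obtain ⟨s, ⟨U, hU, rfl⟩, hsub⟩ := hball (ω₀ : ℕ → M) ω₀.2
      refine ⟨U, hU, ?_⟩
      intro ω hω
      have hmem : ((ω₀ : ℕ → M), (ω : ℕ → M)) ∈ V := by
        apply hVδ
        intro i hi
        have him : i < max m 1 := lt_of_lt_of_le hi (le_max_left _ _)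
        have h1 := hω₀ ⟨i, him⟩
        have h2 := hω ⟨i, him⟩
        calc dist ((ω₀ : ℕ → M) i) ((ω : ℕ → M) i)
            ≤ dist ((ω₀ : ℕ → M) i) (c ⟨i, him⟩) + dist ((ω : ℕ → M) i) (c ⟨i, him⟩) :=
              dist_triangle_right _ _ _
          _ < δ / 2 + δ / 2 := add_lt_add h1 h2
          _ = δ := add_halves δ
      have : (ω : ℕ → M) ∈ hat U := hsub hmem
      rw [← hhatpre U hU]
      exact this
end Cyl
end Anqie
namespace Anqie
section Limsup
open Filter

lemma limsup_le_zero_of_forall_eventually {u : ℕ → ℝ}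
    (h : ∀ c : ℝ, 0 < c → ∀ᶠ n in atTop, u n ≤ c) :
    limsup (fun n => ((u n : ℝ) : EReal)) atTop ≤ 0 := by
  by_contra hlt
  push_neg at hlt
  obtain ⟨c, hc0, hcl⟩ : ∃ c : ℝ, (0 : EReal) < (c : EReal) ∧
      (c : EReal) < limsup (fun n => ((u n : ℝ) : EReal)) atTop := by
    obtain ⟨x, hx1, hx2⟩ := EReal.lt_iff_exists_real_btwn.1 hlt
    exact ⟨x, hx1, hx2⟩
  have hc0' : (0 : ℝ) < c := by exact_mod_cast hc0
  have hev := h (c / 2) (by positivity)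
  have : limsup (fun n => ((u n : ℝ) : EReal)) atTop ≤ ((c / 2 : ℝ) : EReal) := by
    apply limsup_le_of_le (Filter.isCobounded_le_of_bot)
    filter_upwards [hev] with n hn
    exact_mod_cast hn
  have hlt2 : ((c : ℝ) : EReal) < ((c / 2 : ℝ) : EReal) := lt_of_lt_of_le hcl this
  have : (c : ℝ) < c / 2 := by exact_mod_cast hlt2
  linarith

lemma eventually_le_of_limsup_le_zero {u : ℕ → ℝ}
    (h : limsup (fun n => ((u n : ℝ) : EReal)) atTop ≤ 0) {c : ℝ} (hc : 0 < c) :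
    ∀ᶠ n in atTop, u n ≤ c := by
  have hlt : limsup (fun n => ((u n : ℝ) : EReal)) atTop < ((c : ℝ) : EReal) :=
    lt_of_le_of_lt h (by exact_mod_cast hc)
  have := Filter.eventually_lt_of_limsup_lt hlt
  filter_upwards [this] with n hn
  exact le_of_lt (by exact_mod_cast hn)

lemma tail_limsup_le {u : ℕ → ℝ} (m : ℕ)
    (h : ∀ c : ℝ, 0 < c → ∀ᶠ k in atTop, u k ≤ c * k) :
    limsup (fun n => ((u (m + n) / n : ℝ) : EReal)) atTop ≤ 0 := by
  apply limsup_le_zero_of_forall_eventually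
  intro c hc
  obtain ⟨N, hN⟩ := (h (c / 2) (by positivity)).exists_forall_of_atTop
  rw [Filter.eventually_atTop]
  refine ⟨max N m + 1, fun n hn => ?_⟩
  have hnN : N ≤ m + n := by omega
  have hnm : m + n ≤ 2 * n := by omega
  have hn1 : (1 : ℝ) ≤ (n : ℝ) := by exact_mod_cast Nat.one_le_iff_ne_zero.2 (by omega)
  have h1 : u (m + n) ≤ c / 2 * ((m : ℝ) + n) := by
    have := hN _ hnN
    push_cast at this ⊢
    linarith
  have h2 : (c / 2) * (m + n : ℝ) ≤ (c / 2) * (2 * n) := by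
    apply mul_le_mul_of_nonneg_left _ (by positivity)
    exact_mod_cast hnm
  have h3 : u (m + n) ≤ c * n := by
    calc u (m + n) ≤ c / 2 * (m + n) := h1
      _ ≤ c / 2 * (2 * n) := h2
      _ = c * n := by ring
  calc u (m + n) / n ≤ (c * n) / n := by
        apply div_le_div_of_nonneg_right h3 (by linarith)
    _ = c := by field_simp

end Limsup

section Counting
set_option linter.unusedSectionVars false
variable {X : Type*} [TopologicalSpace X]

lemma coverNum_pos [CompactSpace X] [Nonempty X] {𝒱 : Set (Set X)}
    (ho : ∀ V ∈ 𝒱, IsOpen V) (hc : ⋃₀ 𝒱 = Set.univ) : 0 < coverNum 𝒱 := by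
  obtain ⟨F, hF, hFc, hFcard⟩ := exists_subcover_of_coverNum ho hc
  rw [← hFcard]
  rcases Finset.eq_empty_or_nonempty F with rfl | hFne
  · exfalso
    simp only [Finset.coe_empty, Set.sUnion_empty] at hFc
    exact (Set.univ_nonempty).ne_empty hFc.symm
  · exact Finset.card_pos.2 hFne

lemma coverNum_double_join_le [CompactSpace X] {T : X → X} (hT : Continuous T)
    {𝒰 : Set (Set X)} (h𝒰 : IsOpenCover 𝒰) (m n : ℕ) :
    coverNum (iterJoin T (iterJoin T 𝒰 m) n) ≤ coverNum (iterJoin T 𝒰 (m + n)) := by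
  have href : Refines (iterJoin T 𝒰 (m + n)) (iterJoin T (iterJoin T 𝒰 m) n) := by
    rintro V ⟨u, hu, rfl⟩
    refine ⟨⋂ j : Fin n, T^[(j : ℕ)] ⁻¹' (⋂ i : Fin m, T^[(i : ℕ)] ⁻¹'
        (u ⟨(i : ℕ) + (j : ℕ), by omega⟩)), ?_, ?_⟩
    · exact ⟨fun j => ⋂ i : Fin m, T^[(i : ℕ)] ⁻¹' (u ⟨(i : ℕ) + (j : ℕ), by omega⟩),
        fun j => ⟨fun i => u ⟨(i : ℕ) + (j : ℕ), by omega⟩, fun i => hu _, rfl⟩, rfl⟩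
    · intro x hx
      simp only [Set.mem_iInter, Set.mem_preimage] at hx ⊢
      intro j i
      rw [← Function.iterate_add_apply]
      exact hx ⟨(i : ℕ) + (j : ℕ), by omega⟩
  have hcov := h𝒰.iterJoin hT (m + n)
  obtain ⟨F, hF, hFc, hFcard⟩ := exists_subcover_of_coverNum hcov.1 hcov.2
  rw [← hFcard]
  exact coverNum_le_of_refines href hF hFc

end Counting
end Anqie
namespace Anqie
open Filter
section Close
set_option linter.unusedSectionVars false
variable {M : Type*} [MetricSpace M]

lemma comp_mem_orbitClosure {X Y : Type*} [TopologicalSpace X] [TopologicalSpace Y]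
    {ψ : X → Y} (hψ : Continuous ψ) {p : ℕ → X} {ω : ℕ → X} (hω : ω ∈ orbitClosure p) :
    (fun k => ψ (ω k)) ∈ orbitClosure (fun n => ψ (p n)) := by
  set P : (ℕ → X) → (ℕ → Y) := fun τ k => ψ (τ k) with hP
  have hPc : Continuous P := continuous_pi fun k => hψ.comp (continuous_apply k)
  have h1 : P ω ∈ P '' closure (orbitSet p) := Set.mem_image_of_mem _ hω
  have h2 : P '' closure (orbitSet p) ⊆ closure (P '' orbitSet p) :=
    image_closure_subset_closure_image hPc
  have h3 : P '' orbitSet p ⊆ orbitSet (fun n => ψ (p n)) := by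
    rintro _ ⟨τ, ⟨i, hi⟩, rfl⟩
    exact ⟨i, fun k => by simp [hP, hi k]⟩
  exact closure_mono h3 (h2 h1)

lemma coverNum_cyl_le_of_close {f g : ℕ → M} (hgc : IsCompact (orbitClosure g))
    {ε : ℝ} (hε : 0 < ε) (hd : ∀ n, dist (f n) (g n) ≤ ε / 3) (k : ℕ) :
    coverNum (iterJoin (shiftOn f) (cylCover f ε) k) ≤
      coverNum (iterJoin (shiftOn g) (cylCover g (ε / 3)) k) := by
  classical
  haveI : Nonempty M := ⟨g 0⟩
  haveI : CompactSpace ↥(orbitClosure g) := isCompact_iff_compactSpace.mp hgc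
  have hcov := (isOpenCover_cylCover (f := g) (ε := ε / 3) (by positivity)).iterJoin
    (continuous_shiftOn g) k
  obtain ⟨F, hF, hFc, hFcard⟩ := exists_subcover_of_coverNum hcov.1 hcov.2
  have hcent : ∀ V ∈ F, ∃ c : Fin k → M, V = cylSet g (ε / 3) c := fun V hV =>
    iterJoin_cylCover_eq _ _ (hF hV)
  choose! cen hcen using hcent
  rw [← hFcard]
  refine le_trans (coverNum_le (F := F.image fun V => cylSet f ε (cen V)) ?_ ?_)
    Finset.card_image_le
  · intro W hW
    simp only [Finset.coe_image, Set.mem_image, Finset.mem_coe] at hW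
    obtain ⟨V, hV, rfl⟩ := hW
    exact cylSet_mem_iterJoin ε (cen V)
  · apply Set.eq_univ_of_univ_subset
    rintro ω _
    have horb : orbitSet f ⊆ ⋃ V ∈ F,
        {τ : ℕ → M | ∀ j : Fin k, dist (τ (j : ℕ)) (cen V j) ≤ 2 * ε / 3} := by
      rintro τ ⟨i, hi⟩
      have hgmem : (fun t => g (i + t)) ∈ orbitClosure g :=
        subset_closure ⟨i, fun t => rfl⟩
      have hmem0 : (⟨fun t => g (i + t), hgmem⟩ : ↥(orbitClosure g)) ∈
          ⋃₀ (↑F : Set (Set ↥(orbitClosure g))) := hFc ▸ Set.mem_univ _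
      obtain ⟨V, hVF, hmem⟩ := hmem0
      have hVF' : V ∈ F := hVF
      rw [hcen V hVF'] at hmem
      refine Set.mem_biUnion hVF' ?_
      intro j
      have hmj := hmem j
      simp only [cylSet, Set.mem_setOf_eq] at hmj
      calc dist (τ (j : ℕ)) (cen V j) = dist (f (i + (j : ℕ))) (cen V j) := by rw [hi (j : ℕ)]
        _ ≤ dist (f (i + (j : ℕ))) (g (i + (j : ℕ))) + dist (g (i + (j : ℕ))) (cen V j) :=
            dist_triangle _ _ _
        _ ≤ ε / 3 + ε / 3 := add_le_add (hd _) (le_of_lt hmj)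
        _ = 2 * ε / 3 := by ring
    have hclosed : IsClosed (⋃ V ∈ F,
        {τ : ℕ → M | ∀ j : Fin k, dist (τ (j : ℕ)) (cen V j) ≤ 2 * ε / 3}) := by
      apply Set.Finite.isClosed_biUnion F.finite_toSet
      intro V _
      have : {τ : ℕ → M | ∀ j : Fin k, dist (τ (j : ℕ)) (cen V j) ≤ 2 * ε / 3} =
          ⋂ j : Fin k, {τ : ℕ → M | dist (τ (j : ℕ)) (cen V j) ≤ 2 * ε / 3} := by
        ext τ; simp [Set.mem_iInter]
      rw [this]
      exact isClosed_iInter fun j =>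
        isClosed_le ((continuous_apply ((j : ℕ))).dist continuous_const) continuous_const
    have hωmem : (ω : ℕ → M) ∈ ⋃ V ∈ F,
        {τ : ℕ → M | ∀ j : Fin k, dist (τ (j : ℕ)) (cen V j) ≤ 2 * ε / 3} :=
      closure_minimal horb hclosed ω.2
    obtain ⟨V, hVF, hωV⟩ := Set.mem_iUnion₂.1 hωmem
    refine ⟨cylSet f ε (cen V), ?_, ?_⟩
    · simp only [Finset.coe_image, Set.mem_image, Finset.mem_coe]
      exact ⟨V, hVF, rfl⟩
    · intro j
      exact lt_of_le_of_lt (hωV j) (by linarith)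

lemma AE_eq_zero_of_forall_close {f : ℕ → M} (hfc : IsCompact (orbitClosure f))
    (h : ∀ δ : ℝ, 0 < δ → ∃ g : ℕ → M, IsCompact (orbitClosure g) ∧ AE g = 0 ∧
      ∀ n, dist (f n) (g n) ≤ δ) : AE f = 0 := by
  refine le_antisymm (entropy_le ?_) AE_nonneg
  intro 𝒰 h𝒰
  haveI : CompactSpace ↥(orbitClosure f) := isCompact_iff_compactSpace.mp hfc
  have hne : (orbitClosure f).Nonempty :=
    ⟨fun k => f k, subset_closure ⟨0, fun k => by simp⟩⟩
  obtain ⟨ε, m, hε, hm, href⟩ := exists_cyl_refinement hfc hne h𝒰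
  obtain ⟨g, hgc, hg0, hgd⟩ := h (ε / 3) (by positivity)
  set a : ℕ → ℕ := fun kk => coverNum (iterJoin (shiftOn g) (cylCover g (ε / 3)) kk) with ha
  have hgent : limsup (fun kk => ((Real.log (a kk) / kk : ℝ) : EReal)) atTop ≤ 0 := by
    have h1 : coverEntropy (shiftOn g) (cylCover g (ε / 3)) ≤ AE g :=
      le_entropy (isOpenCover_cylCover (by positivity))
    rw [hg0] at h1
    exact h1
  have hev : ∀ c : ℝ, 0 < c → ∀ᶠ kk in atTop, Real.log (a kk) ≤ c * kk := by
    intro c hc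
    have h2 := eventually_le_of_limsup_le_zero hgent (half_pos hc)
    filter_upwards [h2, Filter.eventually_ge_atTop 1] with kk hkk hkk1
    have hkpos : (0 : ℝ) < kk := by exact_mod_cast hkk1
    have := (div_le_iff₀ hkpos).1 hkk
    calc Real.log (a kk) ≤ c / 2 * kk := this
      _ ≤ c * kk := by
        apply mul_le_mul_of_nonneg_right _ (le_of_lt hkpos)
        linarith
  calc coverEntropy (shiftOn f) 𝒰
      ≤ coverEntropy (shiftOn f) (iterJoin (shiftOn f) (cylCover f ε) m) :=
        coverEntropy_mono (continuous_shiftOn f)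
          ((isOpenCover_cylCover hε).iterJoin (continuous_shiftOn f) m) href
    _ ≤ limsup (fun n => ((Real.log (a (m + n)) / n : ℝ) : EReal)) atTop := by
        refine Filter.limsup_le_limsup (Filter.Eventually.of_forall ?_)
          (Filter.isCobounded_le_of_bot) (Filter.isBounded_le_of_top)
        intro n
        have hle : coverNum (iterJoin (shiftOn f) (iterJoin (shiftOn f) (cylCover f ε) m) n) ≤
            a (m + n) := by
          calc coverNum (iterJoin (shiftOn f) (iterJoin (shiftOn f) (cylCover f ε) m) n)
              ≤ coverNum (iterJoin (shiftOn f) (cylCover f ε) (m + n)) :=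
                coverNum_double_join_le (continuous_shiftOn f) (isOpenCover_cylCover hε) m n
            _ ≤ a (m + n) := coverNum_cyl_le_of_close hgc hε hgd (m + n)
        have : Real.log (coverNum (iterJoin (shiftOn f)
            (iterJoin (shiftOn f) (cylCover f ε) m) n)) / n ≤ Real.log (a (m + n)) / n := by
          rcases Nat.eq_zero_or_pos n with rfl | hn
          · simp
          · exact div_le_div_of_nonneg_right (log_nat_mono hle) (by positivity)
        exact EReal.coe_le_coe_iff.2 this
    _ ≤ 0 := tail_limsup_le (u := fun kk => Real.log (a kk)) m hev

end Close
end Anqie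
namespace Anqie
open Filter
section Pair
set_option linter.unusedSectionVars false
variable {M M' : Type*} [MetricSpace M] [MetricSpace M']

lemma eventually_log_coverNum {g : ℕ → M} {ε : ℝ} (hε : 0 < ε) (hg0 : AE g = 0) :
    ∀ c : ℝ, 0 < c → ∀ᶠ kk in atTop,
      Real.log (coverNum (iterJoin (shiftOn g) (cylCover g ε) kk)) ≤ c * kk := by
  have hgent : limsup (fun kk => ((Real.log (coverNum (iterJoin (shiftOn g)
      (cylCover g ε) kk)) / kk : ℝ) : EReal)) atTop ≤ 0 := by
    have h1 : coverEntropy (shiftOn g) (cylCover g ε) ≤ AE g :=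
      le_entropy (isOpenCover_cylCover hε)
    rw [hg0] at h1
    exact h1
  intro c hc
  have h2 := eventually_le_of_limsup_le_zero hgent (half_pos hc)
  filter_upwards [h2, Filter.eventually_ge_atTop 1] with kk hkk hkk1
  have hkpos : (0 : ℝ) < kk := by exact_mod_cast hkk1
  have h3 := (div_le_iff₀ hkpos).1 hkk
  calc Real.log (coverNum (iterJoin (shiftOn g) (cylCover g ε) kk)) ≤ c / 2 * kk := h3
    _ ≤ c * kk := by nlinarith

lemma coverNum_pair_cyl_le {f : ℕ → M} {g : ℕ → M'} (hfc : IsCompact (orbitClosure f))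
    (hgc : IsCompact (orbitClosure g)) {ε : ℝ} (hε : 0 < ε) (k : ℕ) :
    coverNum (iterJoin (shiftOn fun n => (f n, g n))
        (cylCover (fun n => (f n, g n)) ε) k) ≤
      coverNum (iterJoin (shiftOn f) (cylCover f ε) k) *
        coverNum (iterJoin (shiftOn g) (cylCover g ε) k) := by
  classical
  haveI : CompactSpace ↥(orbitClosure f) := isCompact_iff_compactSpace.mp hfc
  haveI : CompactSpace ↥(orbitClosure g) := isCompact_iff_compactSpace.mp hgc
  haveI : Nonempty M := ⟨f 0⟩
  haveI : Nonempty M' := ⟨g 0⟩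
  have hcovf := (isOpenCover_cylCover (f := f) hε).iterJoin (continuous_shiftOn f) k
  have hcovg := (isOpenCover_cylCover (f := g) hε).iterJoin (continuous_shiftOn g) k
  obtain ⟨F, hF, hFc, hFcard⟩ := exists_subcover_of_coverNum hcovf.1 hcovf.2
  obtain ⟨G, hG, hGc, hGcard⟩ := exists_subcover_of_coverNum hcovg.1 hcovg.2
  choose! cenF hcenF using fun V (hV : V ∈ F) => iterJoin_cylCover_eq (f := f) ε k (hF hV)
  choose! cenG hcenG using fun W (hW : W ∈ G) => iterJoin_cylCover_eq (f := g) ε k (hG hW)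
  rw [← hFcard, ← hGcard]
  set p : ℕ → M × M' := fun n => (f n, g n) with hp
  refine le_trans (coverNum_le (F := (F ×ˢ G).image fun VW =>
    cylSet p ε fun j => (cenF VW.1 j, cenG VW.2 j)) ?_ ?_)
    (le_trans Finset.card_image_le (le_of_eq (Finset.card_product F G)))
  · intro W hW
    simp only [Finset.coe_image, Set.mem_image, Finset.mem_coe] at hW
    obtain ⟨VW, _, rfl⟩ := hW
    exact cylSet_mem_iterJoin ε _
  · apply Set.eq_univ_of_univ_subset
    rintro ω _
    have h1 : (fun t => ((ω : ℕ → M × M') t).1) ∈ orbitClosure f :=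
      comp_mem_orbitClosure continuous_fst ω.2
    have h2 : (fun t => ((ω : ℕ → M × M') t).2) ∈ orbitClosure g :=
      comp_mem_orbitClosure continuous_snd ω.2
    have hm1 : (⟨_, h1⟩ : ↥(orbitClosure f)) ∈ ⋃₀ (↑F : Set (Set ↥(orbitClosure f))) :=
      hFc ▸ Set.mem_univ _
    have hm2 : (⟨_, h2⟩ : ↥(orbitClosure g)) ∈ ⋃₀ (↑G : Set (Set ↥(orbitClosure g))) :=
      hGc ▸ Set.mem_univ _
    obtain ⟨V, hVF, hmV⟩ := hm1
    obtain ⟨W, hWG, hmW⟩ := hm2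
    rw [hcenF V hVF] at hmV
    rw [hcenG W hWG] at hmW
    refine ⟨cylSet p ε fun j => (cenF V j, cenG W j), ?_, ?_⟩
    · simp only [Finset.coe_image, Set.mem_image, Finset.mem_coe]
      exact ⟨(V, W), Finset.mem_product.2 ⟨hVF, hWG⟩, rfl⟩
    · intro j
      have hv := hmV j
      have hw := hmW j
      simp only [cylSet, Set.mem_setOf_eq] at hv hw
      rw [Prod.dist_eq]
      exact max_lt hv hw

lemma AE_pair_eq_zero {f : ℕ → M} {g : ℕ → M'} (hfc : IsCompact (orbitClosure f))
    (hgc : IsCompact (orbitClosure g))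
    (hpc : IsCompact (orbitClosure fun n => (f n, g n)))
    (hf0 : AE f = 0) (hg0 : AE g = 0) : AE (fun n => (f n, g n)) = 0 := by
  classical
  set p : ℕ → M × M' := fun n => (f n, g n) with hp
  refine le_antisymm (entropy_le ?_) AE_nonneg
  intro 𝒰 h𝒰
  haveI : CompactSpace ↥(orbitClosure p) := isCompact_iff_compactSpace.mp hpc
  have hne : (orbitClosure p).Nonempty :=
    ⟨fun k => p k, subset_closure ⟨0, fun k => by simp⟩⟩
  obtain ⟨ε, m, hε, hm, href⟩ := exists_cyl_refinement hpc hne h𝒰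
  set a : ℕ → ℕ := fun kk => coverNum (iterJoin (shiftOn f) (cylCover f ε) kk) with ha
  set b : ℕ → ℕ := fun kk => coverNum (iterJoin (shiftOn g) (cylCover g ε) kk) with hb
  have heva := eventually_log_coverNum hε hf0
  have hevb := eventually_log_coverNum hε hg0
  have hev : ∀ c : ℝ, 0 < c → ∀ᶠ kk in atTop,
      Real.log (a kk) + Real.log (b kk) ≤ c * kk := by
    intro c hc
    filter_upwards [heva (c / 2) (by positivity), hevb (c / 2) (by positivity)] with kk h1 h2
    have : c / 2 * kk + c / 2 * kk = c * kk := by ring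
    linarith
  calc coverEntropy (shiftOn p) 𝒰
      ≤ coverEntropy (shiftOn p) (iterJoin (shiftOn p) (cylCover p ε) m) :=
        coverEntropy_mono (continuous_shiftOn p)
          ((isOpenCover_cylCover hε).iterJoin (continuous_shiftOn p) m) href
    _ ≤ limsup (fun n => (((Real.log (a (m + n)) + Real.log (b (m + n))) / n : ℝ) : EReal))
        atTop := by
        refine Filter.limsup_le_limsup (Filter.Eventually.of_forall ?_)
          (Filter.isCobounded_le_of_bot) (Filter.isBounded_le_of_top)
        intro n
        have hle : coverNum (iterJoin (shiftOn p) (iterJoin (shiftOn p) (cylCover p ε) m) n) ≤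
            a (m + n) * b (m + n) := by
          calc coverNum (iterJoin (shiftOn p) (iterJoin (shiftOn p) (cylCover p ε) m) n)
              ≤ coverNum (iterJoin (shiftOn p) (cylCover p ε) (m + n)) :=
                coverNum_double_join_le (continuous_shiftOn p) (isOpenCover_cylCover hε) m n
            _ ≤ a (m + n) * b (m + n) := coverNum_pair_cyl_le hfc hgc hε (m + n)
        have hlog : Real.log (coverNum (iterJoin (shiftOn p)
            (iterJoin (shiftOn p) (cylCover p ε) m) n)) ≤
            Real.log (a (m + n)) + Real.log (b (m + n)) := by
          calc Real.log (coverNum (iterJoin (shiftOn p)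
              (iterJoin (shiftOn p) (cylCover p ε) m) n))
              ≤ Real.log (a (m + n) * b (m + n)) := by
                have := log_nat_mono hle
                simpa using this
            _ ≤ Real.log (a (m + n)) + Real.log (b (m + n)) := by
              rcases Nat.eq_zero_or_pos (a (m + n)) with h0 | hapos
              · rw [h0]; simp [Real.log_natCast_nonneg]
              rcases Nat.eq_zero_or_pos (b (m + n)) with h0 | hbpos
              · rw [h0]; simp [Real.log_natCast_nonneg]
              rw [Real.log_mul (Nat.cast_ne_zero.2 (by omega))
                (Nat.cast_ne_zero.2 (by omega))]
        have : Real.log (coverNum (iterJoin (shiftOn p)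
            (iterJoin (shiftOn p) (cylCover p ε) m) n)) / n ≤
            (Real.log (a (m + n)) + Real.log (b (m + n))) / n := by
          rcases Nat.eq_zero_or_pos n with rfl | hn
          · simp
          · exact div_le_div_of_nonneg_right hlog (by positivity)
        exact EReal.coe_le_coe_iff.2 this
    _ ≤ 0 := tail_limsup_le (u := fun kk => Real.log (a kk) + Real.log (b kk)) m hev

end Pair
end Anqie
namespace Anqie
section E0ops

abbrev BCF := BoundedContinuousFunction ℕ ℂ

lemma isCompact_orbitClosure_of_bcf (F : BCF) : IsCompact (orbitClosure ⇑F) :=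
  isCompact_orbitClosure (isCompact_closedBall (0 : ℂ) ‖F‖)
    (fun n => by simpa [Metric.mem_closedBall, dist_zero_right] using F.norm_coe_le_norm n)

/-- unary continuous functional calculus inside `E₀`. -/
noncomputable def compE (t : E0sub) (ψ : ℂ → ℂ) (hψ : Continuous ψ) : E0sub := by
  refine ⟨BoundedContinuousFunction.ofNormedAddCommGroup
    (fun n => ψ ((t : BCF) n)) (continuous_of_discreteTopology)
    (Classical.choose ((isCompact_closedBall (0 : ℂ) ‖(t : BCF)‖).exists_bound_of_continuousOn
      hψ.continuousOn)) (fun n => ?_), ?_⟩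
  · exact Classical.choose_spec ((isCompact_closedBall (0 : ℂ)
      ‖(t : BCF)‖).exists_bound_of_continuousOn hψ.continuousOn) _
      (by simpa [Metric.mem_closedBall, dist_zero_right] using
        (t : BCF).norm_coe_le_norm n)
  · show AE (fun n => ψ ((t : BCF) n)) = 0
    refine le_antisymm ?_ AE_nonneg
    have := AE_comp_le (X := ℂ) (Y := ℂ) hψ (f := ⇑(t : BCF)) (isCompact_orbitClosure_of_bcf _)
    rw [t.2] at this
    exact this

@[simp] lemma coe_compE (t : E0sub) (ψ : ℂ → ℂ) (hψ : Continuous ψ) :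
    ⇑((compE t ψ hψ : E0sub) : BCF) = fun n => ψ ((t : BCF) n) := rfl

/-- binary continuous functional calculus inside `E₀`. -/
noncomputable def combE (t s : E0sub) (ψ : ℂ × ℂ → ℂ) (hψ : Continuous ψ) : E0sub := by
  have hpair : AE (fun n => ((t : BCF) n, (s : BCF) n)) = 0 :=
    AE_pair_eq_zero (isCompact_orbitClosure_of_bcf _) (isCompact_orbitClosure_of_bcf _)
      (isCompact_orbitClosure
        ((isCompact_closedBall (0 : ℂ) ‖(t : BCF)‖).prod
          (isCompact_closedBall (0 : ℂ) ‖(s : BCF)‖))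
        (fun n => ⟨by simpa [Metric.mem_closedBall, dist_zero_right] using
            (t : BCF).norm_coe_le_norm n,
          by simpa [Metric.mem_closedBall, dist_zero_right] using
            (s : BCF).norm_coe_le_norm n⟩))
      t.2 s.2
  have hb := ((isCompact_closedBall (0 : ℂ) ‖(t : BCF)‖).prod
    (isCompact_closedBall (0 : ℂ) ‖(s : BCF)‖)).exists_bound_of_continuousOn hψ.continuousOn
  refine ⟨BoundedContinuousFunction.ofNormedAddCommGroup
    (fun n => ψ ((t : BCF) n, (s : BCF) n)) (continuous_of_discreteTopology)
    (Classical.choose hb) (fun n => ?_), ?_⟩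
  · exact Classical.choose_spec hb _
      ⟨by simpa [Metric.mem_closedBall, dist_zero_right] using (t : BCF).norm_coe_le_norm n,
       by simpa [Metric.mem_closedBall, dist_zero_right] using (s : BCF).norm_coe_le_norm n⟩
  · show AE (fun n => ψ ((t : BCF) n, (s : BCF) n)) = 0
    refine le_antisymm ?_ AE_nonneg
    have h2 := AE_comp_le (X := ℂ × ℂ) (Y := ℂ) hψ
      (f := fun n => ((t : BCF) n, (s : BCF) n))
      (isCompact_orbitClosure
        ((isCompact_closedBall (0 : ℂ) ‖(t : BCF)‖).prod
          (isCompact_closedBall (0 : ℂ) ‖(s : BCF)‖))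
        (fun n => ⟨by simpa [Metric.mem_closedBall, dist_zero_right] using
            (t : BCF).norm_coe_le_norm n,
          by simpa [Metric.mem_closedBall, dist_zero_right] using
            (s : BCF).norm_coe_le_norm n⟩))
    rw [hpair] at h2
    exact h2

@[simp] lemma coe_combE (t s : E0sub) (ψ : ℂ × ℂ → ℂ) (hψ : Continuous ψ) :
    ⇑((combE t s ψ hψ : E0sub) : BCF) = fun n => ψ ((t : BCF) n, (s : BCF) n) := rfl

lemma AE_one : AE ⇑(1 : BCF) = 0 := by
  have : ⇑(1 : BCF) = fun _ : ℕ => (1 : ℂ) := rfl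
  rw [this]
  exact AE_const 1

noncomputable def oneE : E0sub := ⟨1, AE_one⟩

lemma AE_e0_const (c : ℂ) : AE ⇑(BoundedContinuousFunction.const ℕ c) = 0 := by
  have : ⇑(BoundedContinuousFunction.const ℕ c) = fun _ : ℕ => c := rfl
  rw [this]
  exact AE_const c

noncomputable def constE (c : ℂ) : E0sub := ⟨BoundedContinuousFunction.const ℕ c, AE_e0_const c⟩

noncomputable def addE (t s : E0sub) : E0sub :=
  combE t s (fun q => q.1 + q.2) (continuous_fst.add continuous_snd)

lemma coe_addE (t s : E0sub) : ((addE t s : E0sub) : BCF) = (t : BCF) + (s : BCF) := by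
  apply BoundedContinuousFunction.ext
  intro n
  rfl

noncomputable def mulE (t s : E0sub) : E0sub :=
  combE t s (fun q => q.1 * q.2) (continuous_fst.mul continuous_snd)

lemma coe_mulE (t s : E0sub) : ((mulE t s : E0sub) : BCF) = (t : BCF) * (s : BCF) := by
  apply BoundedContinuousFunction.ext
  intro n
  rfl

noncomputable def subE (t s : E0sub) : E0sub :=
  combE t s (fun q => q.1 - q.2) (continuous_fst.sub continuous_snd)

lemma coe_subE (t s : E0sub) : ((subE t s : E0sub) : BCF) = (t : BCF) - (s : BCF) := by
  apply BoundedContinuousFunction.ext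
  intro n
  rfl

noncomputable def smulE (c : ℂ) (t : E0sub) : E0sub :=
  compE t (fun z => c * z) (continuous_const.mul continuous_id)

lemma coe_smulE (c : ℂ) (t : E0sub) : ((smulE c t : E0sub) : BCF) = c • (t : BCF) := by
  apply BoundedContinuousFunction.ext
  intro n
  rfl

end E0ops
end Anqie
namespace Anqie
section Char
variable {φ : E0sub → ℂ}

lemma CharSpace.one_eq (hφ : φ ∈ CharSpace) : φ oneE = 1 := by
  obtain ⟨⟨f0, hf0⟩, hadd, hsmul, hmul⟩ := hφ
  have h1 : φ f0 = φ f0 * φ oneE := by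
    apply hmul f0 oneE f0
    show (f0 : BCF) = (f0 : BCF) * (1 : BCF)
    rw [mul_one]
  have := h1.symm
  nth_rewrite 2 [show φ f0 = φ f0 * 1 by rw [mul_one]] at this
  exact mul_left_cancel₀ hf0 this

lemma CharSpace.const_eq (hφ : φ ∈ CharSpace) (c : ℂ) : φ (constE c) = c := by
  obtain ⟨hne, hadd, hsmul, hmul⟩ := hφ
  have h1 : φ (constE c) = c * φ oneE := by
    apply hsmul c oneE (constE c)
    apply BoundedContinuousFunction.ext
    intro n
    show c = c • (1 : ℂ)
    simp
  rw [h1, CharSpace.one_eq ⟨hne, hadd, hsmul, hmul⟩, mul_one]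

lemma CharSpace.mem_closure_range (hφ : φ ∈ CharSpace) (t : E0sub) :
    φ t ∈ closure (Set.range ⇑(t : BCF)) := by
  by_contra hmem
  set lam := φ t with hlam
  obtain ⟨δ, hδ, hball⟩ : ∃ δ, 0 < δ ∧ ∀ z ∈ Set.range ⇑(t : BCF), δ ≤ dist lam z := by
    rw [Metric.mem_closure_iff] at hmem
    push_neg at hmem
    obtain ⟨δ, hδ, h⟩ := hmem
    exact ⟨δ, hδ, h⟩
  set ψ : ℂ → ℂ := fun z => (starRingEnd ℂ) (lam - z) /
    (((max (‖lam - z‖) δ : ℝ) : ℂ) ^ 2) with hψdef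
  have hψc : Continuous ψ := by
    apply Continuous.div
    · exact Complex.continuous_conj.comp (continuous_const.sub continuous_id)
    · apply Continuous.pow
      apply Complex.continuous_ofReal.comp
      exact Continuous.max ((continuous_norm).comp
        (continuous_const.sub continuous_id)) continuous_const
    · intro z
      apply pow_ne_zero
      have h1 : δ ≤ max (‖lam - z‖) δ := le_max_right _ _
      have h2 : (0 : ℝ) < max (‖lam - z‖) δ := lt_of_lt_of_le hδ h1
      exact_mod_cast ne_of_gt h2
  set uE : E0sub := compE t ψ hψc with huE
  set wE : E0sub := subE (constE lam) t with hwE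
  obtain ⟨hne, hadd, hsmul, hmul⟩ := hφ
  have hφ' : φ ∈ CharSpace := ⟨hne, hadd, hsmul, hmul⟩
  -- mulE uE wE = oneE
  have hprod : mulE uE wE = oneE := by
    apply Subtype.ext
    rw [coe_mulE]
    apply BoundedContinuousFunction.ext
    intro n
    show ((uE : BCF) n) * ((wE : BCF) n) = 1
    have hu : (uE : BCF) n = ψ ((t : BCF) n) := rfl
    have hw : (wE : BCF) n = lam - (t : BCF) n := by
      rw [hwE, coe_subE]
      rfl
    rw [hu, hw]
    have habs : δ ≤ ‖lam - (t : BCF) n‖ := by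
      have := hball ((t : BCF) n) ⟨n, rfl⟩
      rwa [Complex.dist_eq] at this
    show (starRingEnd ℂ) (lam - (t : BCF) n) /
        (((max (‖lam - (t : BCF) n‖) δ : ℝ) : ℂ) ^ 2) * (lam - (t : BCF) n) = 1
    generalize hgen : lam - (t : BCF) n = w at habs ⊢
    have hwne : w ≠ 0 := by
      intro h0
      rw [h0] at habs
      simp at habs
      linarith
    have hmax : max (‖w‖) δ = ‖w‖ := max_eq_left habs
    rw [hmax]
    have habsne : (((‖w‖ : ℝ) : ℂ)) ≠ 0 :=
      Complex.ofReal_ne_zero.2 ((norm_ne_zero_iff).2 hwne)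
    have hconj : w * (starRingEnd ℂ) w = ((‖w‖ : ℝ) : ℂ) ^ 2 := by
      rw [Complex.mul_conj, ← Complex.sq_norm]
      push_cast
      ring
    rw [div_mul_eq_mul_div, mul_comm, hconj]
    exact div_self (pow_ne_zero 2 habsne)
  have h1 : φ (mulE uE wE) = φ uE * φ wE := by
    apply hmul uE wE (mulE uE wE) (coe_mulE uE wE)
  have hwval : φ wE = 0 := by
    have h2 : φ wE = φ (constE lam) + φ (smulE (-1) t) := by
      apply hadd (constE lam) (smulE (-1) t) wE
      rw [hwE, coe_subE, coe_smulE]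
      apply BoundedContinuousFunction.ext
      intro n
      show lam - (t : BCF) n = lam + (-1 : ℂ) • ((t : BCF) n)
      simp
      ring
    have h3 : φ (smulE (-1) t) = -1 * φ t := hsmul (-1) t _ (coe_smulE (-1) t)
    rw [h2, CharSpace.const_eq hφ' lam, h3]
    rw [← hlam]
    ring
  have : (1 : ℂ) = 0 := by
    calc (1 : ℂ) = φ oneE := (CharSpace.one_eq hφ').symm
      _ = φ (mulE uE wE) := by rw [hprod]
      _ = φ uE * φ wE := h1
      _ = φ uE * 0 := by rw [hwval]
      _ = 0 := mul_zero _
  exact one_ne_zero this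

lemma CharSpace.norm_le (hφ : φ ∈ CharSpace) (t : E0sub) : ‖φ t‖ ≤ ‖(t : BCF)‖ := by
  have h1 := CharSpace.mem_closure_range hφ t
  have h2 : closure (Set.range ⇑(t : BCF)) ⊆ Metric.closedBall 0 ‖(t : BCF)‖ := by
    apply closure_minimal _ Metric.isClosed_closedBall
    rintro _ ⟨n, rfl⟩
    simp only [Metric.mem_closedBall, dist_zero_right]
    exact (t : BCF).norm_coe_le_norm n
  have := h2 h1
  simpa [Metric.mem_closedBall, dist_zero_right] using this

lemma CharSpace.lipschitz (hφ : φ ∈ CharSpace) (t s : E0sub) :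
    ‖φ t - φ s‖ ≤ ‖(t : BCF) - (s : BCF)‖ := by
  obtain ⟨hne, hadd, hsmul, hmul⟩ := hφ
  have hφ' : φ ∈ CharSpace := ⟨hne, hadd, hsmul, hmul⟩
  have h1 : φ t = φ (subE t s) + φ s := by
    apply hadd (subE t s) s t
    rw [coe_subE]
    ring
  have h2 : φ t - φ s = φ (subE t s) := by rw [h1]; ring
  rw [h2]
  have := CharSpace.norm_le hφ' (subE t s)
  rwa [coe_subE] at this

lemma CharSpace.mem_range_of_finite (hφ : φ ∈ CharSpace) (t : E0sub)
    (hfin : (Set.range ⇑(t : BCF)).Finite) : φ t ∈ Set.range ⇑(t : BCF) := by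
  have h1 := CharSpace.mem_closure_range hφ t
  rwa [hfin.isClosed.closure_eq] at h1

/-- evaluation characters -/
noncomputable def evE (n : ℕ) : E0sub → ℂ := fun t => (t : BCF) n

lemma evE_mem (n : ℕ) : evE n ∈ CharSpace := by
  refine ⟨⟨oneE, ?_⟩, ?_, ?_, ?_⟩
  · show (1 : BCF) n ≠ 0
    simp
  · intro f g h he
    show (h : BCF) n = (f : BCF) n + (g : BCF) n
    rw [he]
    rfl
  · intro c f g he
    show (g : BCF) n = c * (f : BCF) n
    rw [he]
    rfl
  · intro f g h he
    show (h : BCF) n = (f : BCF) n * (g : BCF) n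
    rw [he]
    rfl

end Char
end Anqie
namespace Anqie
section Backward
set_option maxHeartbeats 1000000

lemma subsingleton_of_preconnected_finite {P F : Set ℂ} (hP : IsPreconnected P)
    (hPF : P ⊆ F) (hF : F.Finite) : P.Subsingleton := by
  intro a ha b hb
  by_contra hab
  set E := F \ {a} with hE
  have hEfin : E.Finite := hF.diff
  have hEclosed : IsClosed E := hEfin.isClosed
  have hEne : E.Nonempty := ⟨b, hPF hb, by simp [Ne.symm hab]⟩
  have haE : a ∉ E := by simp [hE]
  have hpos : 0 < Metric.infDist a E := by
    rwa [← IsClosed.notMem_iff_infDist_pos hEclosed hEne]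
  set δ := Metric.infDist a E with hδ
  have hU : IsOpen (Metric.ball a (δ / 2)) := Metric.isOpen_ball
  have hV : IsOpen {z : ℂ | δ / 2 < dist a z} :=
    isOpen_lt continuous_const (continuous_const.dist continuous_id)
  have hcover : P ⊆ Metric.ball a (δ / 2) ∪ {z : ℂ | δ / 2 < dist a z} := by
    intro z hz
    rcases eq_or_ne z a with rfl | hza
    · left; simp [Metric.mem_ball, half_pos hpos]
    · right
      have hzE : z ∈ E := ⟨hPF hz, hza⟩
      have h1 : δ ≤ dist a z := Metric.infDist_le_dist_of_mem hzE
      show δ / 2 < dist a z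
      linarith
  have hPa : (P ∩ Metric.ball a (δ / 2)).Nonempty :=
    ⟨a, ha, by simp [Metric.mem_ball, half_pos hpos]⟩
  have hPb : (P ∩ {z : ℂ | δ / 2 < dist a z}).Nonempty := by
    refine ⟨b, hb, ?_⟩
    have hbE : b ∈ E := ⟨hPF hb, Ne.symm hab⟩
    have h1 : δ ≤ dist a b := Metric.infDist_le_dist_of_mem hbE
    show δ / 2 < dist a b
    linarith
  obtain ⟨z, _, hz1, hz2⟩ := hP _ _ hU hV hcover hPa hPb
  rw [Metric.mem_ball, dist_comm] at hz1
  simp only [Set.mem_setOf_eq] at hz2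
  linarith

lemma td_of_dense
    (hdense : {f : BCF | AE ⇑f = 0} =
      closure {f : BCF | AE ⇑f = 0 ∧ (Set.range ⇑f).Finite}) :
    TotallyDisconnectedSpace ↥CharSpace := by
  constructor
  intro t _ ht
  intro φ hφt ψ hψt
  -- agreement on finite-range elements
  have hfinagree : ∀ s : E0sub, (Set.range ⇑(s : BCF)).Finite → φ.1 s = ψ.1 s := by
    intro s hs
    have hcont : Continuous fun χ : ↥CharSpace => χ.1 s :=
      (continuous_apply s).comp continuous_subtype_val
    have himg : IsPreconnected ((fun χ : ↥CharSpace => χ.1 s) '' t) :=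
      ht.image _ hcont.continuousOn
    have hsubF : ((fun χ : ↥CharSpace => χ.1 s) '' t) ⊆ Set.range ⇑(s : BCF) := by
      rintro _ ⟨χ, hχ, rfl⟩
      exact CharSpace.mem_range_of_finite χ.2 s hs
    have hsub := subsingleton_of_preconnected_finite himg hsubF hs
    exact hsub (Set.mem_image_of_mem _ hφt) (Set.mem_image_of_mem _ hψt)
  -- agreement everywhere
  have hagree : ∀ u : E0sub, φ.1 u = ψ.1 u := by
    intro u
    have hεbound : ∀ ε : ℝ, 0 < ε → ‖φ.1 u - ψ.1 u‖ ≤ 2 * ε := by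
      intro ε hε
      have humem : (u : BCF) ∈ closure {f : BCF | AE ⇑f = 0 ∧ (Set.range ⇑f).Finite} := by
        rw [← hdense]
        exact u.2
      rw [Metric.mem_closure_iff] at humem
      obtain ⟨g, hg, hdist⟩ := humem (ε := ε) hε
      set gE : E0sub := ⟨g, hg.1⟩ with hgE
      have hmid : φ.1 gE = ψ.1 gE := hfinagree gE hg.2
      have h1 : ‖φ.1 u - φ.1 gE‖ ≤ ‖(u : BCF) - g‖ := CharSpace.lipschitz φ.2 u gE
      have h2 : ‖ψ.1 gE - ψ.1 u‖ ≤ ‖g - (u : BCF)‖ := CharSpace.lipschitz ψ.2 gE u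
      have hne : ‖(u : BCF) - g‖ < ε := by
        rw [← dist_eq_norm]
        exact hdist
      have hne2 : ‖g - (u : BCF)‖ < ε := by
        rw [norm_sub_rev]
        exact hne
      calc ‖φ.1 u - ψ.1 u‖ = ‖(φ.1 u - φ.1 gE) + (φ.1 gE - ψ.1 gE) + (ψ.1 gE - ψ.1 u)‖ := by
            congr 1; ring
        _ ≤ ‖(φ.1 u - φ.1 gE) + (φ.1 gE - ψ.1 gE)‖ + ‖ψ.1 gE - ψ.1 u‖ := norm_add_le _ _
        _ ≤ ‖φ.1 u - φ.1 gE‖ + ‖φ.1 gE - ψ.1 gE‖ + ‖ψ.1 gE - ψ.1 u‖ := by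
            have := norm_add_le (φ.1 u - φ.1 gE) (φ.1 gE - ψ.1 gE)
            linarith
        _ ≤ ε + 0 + ε := by
            have hmid0 : ‖φ.1 gE - ψ.1 gE‖ = (0 : ℝ) := by rw [hmid]; simp
            have hh1 := lt_of_le_of_lt h1 hne
            have hh2 := lt_of_le_of_lt h2 hne2
            linarith
        _ ≤ 2 * ε := by linarith
    by_contra hne
    have hpos : 0 < ‖φ.1 u - ψ.1 u‖ := by
      rw [norm_pos_iff]
      exact sub_ne_zero.2 hne
    have := hεbound (‖φ.1 u - ψ.1 u‖ / 4) (by linarith)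
    linarith
  exact Subtype.ext (funext hagree)

end Backward
end Anqie
namespace Anqie
section Closedness

lemma E0_isClosed : IsClosed {f : BCF | AE ⇑f = 0} := by
  rw [← closure_eq_iff_isClosed]
  apply Set.Subset.antisymm _ subset_closure
  intro f hf
  show AE ⇑f = 0
  apply AE_eq_zero_of_forall_close (isCompact_orbitClosure_of_bcf f)
  intro δ hδ
  rw [Metric.mem_closure_iff] at hf
  obtain ⟨g, hg, hdist⟩ := hf δ hδ
  refine ⟨⇑g, isCompact_orbitClosure_of_bcf g, hg, fun n => ?_⟩
  exact le_of_lt (lt_of_le_of_lt (BoundedContinuousFunction.dist_coe_le_dist n) hdist)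

lemma isClosed_charSpace : IsClosed CharSpace := by
  have heq : CharSpace = {φ : E0sub → ℂ | φ oneE = 1} ∩
      ({φ : E0sub → ℂ | ∀ f g h : E0sub, (h : BCF) = (f : BCF) + g → φ h = φ f + φ g} ∩
       ({φ : E0sub → ℂ | ∀ (c : ℂ) (f g : E0sub), (g : BCF) = c • (f : BCF) → φ g = c * φ f} ∩
        {φ : E0sub → ℂ | ∀ f g h : E0sub, (h : BCF) = (f : BCF) * g → φ h = φ f * φ g})) := by
    ext φ
    constructor
    · rintro ⟨hne, hadd, hsmul, hmul⟩
      exact ⟨CharSpace.one_eq ⟨hne, hadd, hsmul, hmul⟩, hadd, hsmul, hmul⟩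
    · rintro ⟨h1, hadd, hsmul, hmul⟩
      exact ⟨⟨oneE, by rw [h1]; exact one_ne_zero⟩, hadd, hsmul, hmul⟩
  rw [heq]
  refine IsClosed.inter ?_ (IsClosed.inter ?_ (IsClosed.inter ?_ ?_))
  · exact isClosed_eq (continuous_apply oneE) continuous_const
  · have h2 : {φ : E0sub → ℂ | ∀ f g h : E0sub, (h : BCF) = (f : BCF) + g →
        φ h = φ f + φ g} = ⋂ (f : E0sub) (g : E0sub) (h : E0sub),
        {φ : E0sub → ℂ | (h : BCF) = (f : BCF) + g → φ h = φ f + φ g} := by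
      ext φ; simp only [Set.mem_setOf_eq, Set.mem_iInter]
    rw [h2]
    refine isClosed_iInter fun f => isClosed_iInter fun g => isClosed_iInter fun h => ?_
    by_cases hc : (h : BCF) = (f : BCF) + g
    · have : {φ : E0sub → ℂ | (h : BCF) = (f : BCF) + g → φ h = φ f + φ g} =
          {φ : E0sub → ℂ | φ h = φ f + φ g} := by
        ext φ; simp [hc]
      rw [this]
      exact isClosed_eq (continuous_apply h) ((continuous_apply f).add (continuous_apply g))
    · have : {φ : E0sub → ℂ | (h : BCF) = (f : BCF) + g → φ h = φ f + φ g} = Set.univ := by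
        ext φ; simp [hc]
      rw [this]; exact isClosed_univ
  · have h2 : {φ : E0sub → ℂ | ∀ (c : ℂ) (f g : E0sub), (g : BCF) = c • (f : BCF) →
        φ g = c * φ f} = ⋂ (c : ℂ) (f : E0sub) (g : E0sub),
        {φ : E0sub → ℂ | (g : BCF) = c • (f : BCF) → φ g = c * φ f} := by
      ext φ; simp only [Set.mem_setOf_eq, Set.mem_iInter]
    rw [h2]
    refine isClosed_iInter fun c => isClosed_iInter fun f => isClosed_iInter fun g => ?_
    by_cases hc : (g : BCF) = c • (f : BCF)
    · have : {φ : E0sub → ℂ | (g : BCF) = c • (f : BCF) → φ g = c * φ f} =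
          {φ : E0sub → ℂ | φ g = c * φ f} := by
        ext φ; simp [hc]
      rw [this]
      exact isClosed_eq (continuous_apply g) (continuous_const.mul (continuous_apply f))
    · have : {φ : E0sub → ℂ | (g : BCF) = c • (f : BCF) → φ g = c * φ f} = Set.univ := by
        ext φ; simp [hc]
      rw [this]; exact isClosed_univ
  · have h2 : {φ : E0sub → ℂ | ∀ f g h : E0sub, (h : BCF) = (f : BCF) * g →
        φ h = φ f * φ g} = ⋂ (f : E0sub) (g : E0sub) (h : E0sub),
        {φ : E0sub → ℂ | (h : BCF) = (f : BCF) * g → φ h = φ f * φ g} := by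
      ext φ; simp only [Set.mem_setOf_eq, Set.mem_iInter]
    rw [h2]
    refine isClosed_iInter fun f => isClosed_iInter fun g => isClosed_iInter fun h => ?_
    by_cases hc : (h : BCF) = (f : BCF) * g
    · have : {φ : E0sub → ℂ | (h : BCF) = (f : BCF) * g → φ h = φ f * φ g} =
          {φ : E0sub → ℂ | φ h = φ f * φ g} := by
        ext φ; simp [hc]
      rw [this]
      exact isClosed_eq (continuous_apply h) ((continuous_apply f).mul (continuous_apply g))
    · have : {φ : E0sub → ℂ | (h : BCF) = (f : BCF) * g → φ h = φ f * φ g} = Set.univ := by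
        ext φ; simp [hc]
      rw [this]; exact isClosed_univ

lemma isCompact_charSpace : IsCompact CharSpace := by
  apply IsCompact.of_isClosed_subset
    (isCompact_univ_pi fun t : E0sub => isCompact_closedBall (0 : ℂ) ‖(t : BCF)‖)
    isClosed_charSpace
  intro φ hφ
  rw [Set.mem_univ_pi]
  intro t
  simpa [Metric.mem_closedBall, dist_zero_right] using CharSpace.norm_le hφ t

instance : CompactSpace ↥CharSpace := isCompact_iff_compactSpace.mp isCompact_charSpace

end Closedness
end Anqie
namespace Anqie
section Star

noncomputable def conjE (t : E0sub) : E0sub :=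
  compE t (fun z => (starRingEnd ℂ) z) Complex.continuous_conj

noncomputable def reE (t : E0sub) : E0sub :=
  compE t (fun z => (z.re : ℂ)) (Complex.continuous_ofReal.comp Complex.continuous_re)

noncomputable def imE (t : E0sub) : E0sub :=
  compE t (fun z => (z.im : ℂ)) (Complex.continuous_ofReal.comp Complex.continuous_im)

variable {φ : E0sub → ℂ}

lemma CharSpace.im_eq_zero (hφ : φ ∈ CharSpace) (t : E0sub)
    (ht : ∀ n, ((t : BCF) n).im = 0) : (φ t).im = 0 := by
  have h1 := CharSpace.mem_closure_range hφ t
  have h2 : closure (Set.range ⇑(t : BCF)) ⊆ {z : ℂ | z.im = 0} :=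
    closure_minimal (by rintro _ ⟨n, rfl⟩; exact ht n)
      (isClosed_eq Complex.continuous_im continuous_const)
  exact h2 h1

lemma CharSpace.conj_eq (hφ : φ ∈ CharSpace) (t : E0sub) :
    φ (conjE t) = (starRingEnd ℂ) (φ t) := by
  obtain ⟨hne, hadd, hsmul, hmul⟩ := hφ
  have hφ' : φ ∈ CharSpace := ⟨hne, hadd, hsmul, hmul⟩
  have ha : (φ (reE t)).im = 0 := by
    apply CharSpace.im_eq_zero hφ' (reE t)
    intro n
    show ((((t : BCF) n).re : ℂ)).im = 0
    simp
  have hb : (φ (imE t)).im = 0 := by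
    apply CharSpace.im_eq_zero hφ' (imE t)
    intro n
    show ((((t : BCF) n).im : ℂ)).im = 0
    simp
  have hdecomp : φ t = φ (reE t) + Complex.I * φ (imE t) := by
    have hBCF : (t : BCF) = ((reE t : E0sub) : BCF) + ((smulE Complex.I (imE t) : E0sub) : BCF) := by
      apply BoundedContinuousFunction.ext
      intro n
      show (t : BCF) n = ((((t : BCF) n).re : ℂ)) + Complex.I • ((((t : BCF) n).im : ℂ))
      rw [smul_eq_mul, mul_comm]
      exact (Complex.re_add_im _).symm
    rw [hadd (reE t) (smulE Complex.I (imE t)) t hBCF,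
      hsmul Complex.I (imE t) _ (coe_smulE Complex.I (imE t))]
  have hdecomp2 : φ (conjE t) = φ (reE t) - Complex.I * φ (imE t) := by
    have hBCF : ((conjE t : E0sub) : BCF) =
        ((reE t : E0sub) : BCF) + ((smulE (-Complex.I) (imE t) : E0sub) : BCF) := by
      apply BoundedContinuousFunction.ext
      intro n
      show (starRingEnd ℂ) ((t : BCF) n) =
        ((((t : BCF) n).re : ℂ)) + (-Complex.I) • ((((t : BCF) n).im : ℂ))
      rw [smul_eq_mul]
      apply Complex.ext <;> simp
    rw [hadd (reE t) (smulE (-Complex.I) (imE t)) (conjE t) hBCF,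
      hsmul (-Complex.I) (imE t) _ (coe_smulE (-Complex.I) (imE t))]
    ring
  rw [hdecomp, hdecomp2]
  apply Complex.ext <;>
    simp [Complex.add_re, Complex.add_im, Complex.mul_re, Complex.mul_im, ha, hb]

end Star

section Gelfand

noncomputable def Gel (t : E0sub) : C(↥CharSpace, ℂ) :=
  ⟨fun χ => χ.1 t, (continuous_apply t).comp continuous_subtype_val⟩

@[simp] lemma Gel_apply (t : E0sub) (χ : ↥CharSpace) : Gel t χ = χ.1 t := rfl

lemma norm_Gel_sub_le (t s : E0sub) : ‖Gel t - Gel s‖ ≤ ‖(t : BCF) - (s : BCF)‖ := by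
  rw [ContinuousMap.norm_le _ (norm_nonneg _)]
  intro χ
  show ‖Gel t χ - Gel s χ‖ ≤ _
  exact CharSpace.lipschitz χ.2 t s

lemma norm_sub_le_Gel (t s : E0sub) : ‖(t : BCF) - (s : BCF)‖ ≤ ‖Gel t - Gel s‖ := by
  rw [BoundedContinuousFunction.norm_le (norm_nonneg _)]
  intro n
  have h1 : ((t : BCF) - (s : BCF)) n = (Gel t - Gel s) ⟨evE n, evE_mem n⟩ := rfl
  rw [h1]
  exact (Gel t - Gel s).norm_coe_le_norm ⟨evE n, evE_mem n⟩

noncomputable def GelRange : StarSubalgebra ℂ C(↥CharSpace, ℂ) where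
  carrier := Set.range Gel
  mul_mem' := by
    rintro _ _ ⟨t, rfl⟩ ⟨s, rfl⟩
    refine ⟨mulE t s, ?_⟩
    apply ContinuousMap.ext
    intro χ
    show χ.1 (mulE t s) = (Gel t * Gel s) χ
    rw [ContinuousMap.mul_apply]
    exact χ.2.2.2.2 t s (mulE t s) (coe_mulE t s)
  add_mem' := by
    rintro _ _ ⟨t, rfl⟩ ⟨s, rfl⟩
    refine ⟨addE t s, ?_⟩
    apply ContinuousMap.ext
    intro χ
    show χ.1 (addE t s) = (Gel t + Gel s) χ
    rw [ContinuousMap.add_apply]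
    exact χ.2.2.1 t s (addE t s) (coe_addE t s)
  algebraMap_mem' := by
    intro c
    refine ⟨constE c, ?_⟩
    apply ContinuousMap.ext
    intro χ
    show χ.1 (constE c) = _
    rw [CharSpace.const_eq χ.2 c]
    rfl
  star_mem' := by
    rintro _ ⟨t, rfl⟩
    refine ⟨conjE t, ?_⟩
    apply ContinuousMap.ext
    intro χ
    show χ.1 (conjE t) = star (Gel t) χ
    rw [ContinuousMap.star_apply]
    exact CharSpace.conj_eq χ.2 t

lemma GelRange_separatesPoints : GelRange.SeparatesPoints := by
  intro χ₁ χ₂ hne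
  have : ∃ t : E0sub, χ₁.1 t ≠ χ₂.1 t := by
    by_contra hc
    push_neg at hc
    exact hne (Subtype.ext (funext hc))
  obtain ⟨t, ht⟩ := this
  exact ⟨⇑(Gel t), ⟨Gel t, ⟨t, rfl⟩, rfl⟩, ht⟩

lemma isClosed_GelRange : IsClosed (Set.range Gel) := by
  rw [← closure_eq_iff_isClosed]
  apply Set.Subset.antisymm _ subset_closure
  intro h hh
  rw [mem_closure_iff_seq_limit] at hh
  obtain ⟨y, hy, hlim⟩ := hh
  choose tseq htseq using hy
  have hcauchy : CauchySeq (fun k => ((tseq k : E0sub) : BCF)) := by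
    rw [Metric.cauchySeq_iff]
    have hcy : CauchySeq y := hlim.cauchySeq
    rw [Metric.cauchySeq_iff] at hcy
    intro ε hε
    obtain ⟨N, hN⟩ := hcy ε hε
    refine ⟨N, fun p hp q hq => ?_⟩
    have h2 := hN p hp q hq
    rw [dist_eq_norm] at h2 ⊢
    calc ‖((tseq p : E0sub) : BCF) - ((tseq q : E0sub) : BCF)‖
        ≤ ‖Gel (tseq p) - Gel (tseq q)‖ := norm_sub_le_Gel _ _
      _ = ‖y p - y q‖ := by rw [htseq p, htseq q]
      _ < ε := h2
  obtain ⟨F, hF⟩ := cauchySeq_tendsto_of_complete hcauchy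
  have hF0 : AE ⇑F = 0 := by
    have hmem : F ∈ closure {f : BCF | AE ⇑f = 0} :=
      mem_closure_of_tendsto hF (Filter.Eventually.of_forall fun k => (tseq k).2)
    rwa [E0_isClosed.closure_eq] at hmem
  refine ⟨⟨F, hF0⟩, ?_⟩
  apply ContinuousMap.ext
  intro χ
  have h1 : Filter.Tendsto (fun k => Gel (tseq k) χ) Filter.atTop (nhds (h χ)) := by
    have h2 : Filter.Tendsto (fun k => (y k) χ) Filter.atTop (nhds (h χ)) :=
      ((continuous_eval_const χ).tendsto h).comp hlim
    convert h2 using 2 with k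
    rw [htseq k]
  have h2 : Filter.Tendsto (fun k => Gel (tseq k) χ) Filter.atTop
      (nhds (χ.1 ⟨F, hF0⟩)) := by
    rw [tendsto_iff_dist_tendsto_zero]
    apply squeeze_zero (fun k => dist_nonneg)
      (g := fun k => dist ((tseq k : E0sub) : BCF) F)
    · intro k
      rw [dist_eq_norm, dist_eq_norm]
      exact CharSpace.lipschitz χ.2 (tseq k) ⟨F, hF0⟩
    · rwa [← tendsto_iff_dist_tendsto_zero]
  exact tendsto_nhds_unique h2 h1

lemma Gel_surjective : Function.Surjective Gel := by
  intro h
  have htop := ContinuousMap.starSubalgebra_topologicalClosure_eq_top_of_separatesPoints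
    GelRange GelRange_separatesPoints
  have hmem : h ∈ GelRange.topologicalClosure := by
    rw [htop]
    exact StarSubalgebra.mem_top
  have hmem2 : h ∈ closure (Set.range Gel) := hmem
  rwa [isClosed_GelRange.closure_eq] at hmem2

end Gelfand
end Anqie
namespace Anqie
section Approx

lemma exists_finite_range_approx [TotallyDisconnectedSpace ↥CharSpace]
    (h : C(↥CharSpace, ℂ)) {ε : ℝ} (hε : 0 < ε) :
    ∃ g : C(↥CharSpace, ℂ), (Set.range ⇑g).Finite ∧ ‖h - g‖ ≤ ε := by
  classical
  haveI : Nonempty ↥CharSpace := ⟨⟨evE 0, evE_mem 0⟩⟩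
  -- clopen covers
  have hclop : ∀ x : ↥CharSpace, ∃ V : Set ↥CharSpace, IsClopen V ∧ x ∈ V ∧
      V ⊆ h ⁻¹' Metric.ball (h x) ε := by
    intro x
    apply compact_exists_isClopen_in_isOpen (Metric.isOpen_ball.preimage h.continuous)
    simp [Metric.mem_ball, hε]
  choose C hCclop hCx hCsub using hclop
  obtain ⟨s, hs⟩ := isCompact_univ.elim_finite_subcover C (fun x => (hCclop x).2)
    (fun x _ => Set.mem_iUnion.2 ⟨x, hCx x⟩)
  set L := s.toList with hL
  set n := L.length with hn
  set pt : ℕ → ↥CharSpace := fun i => if hi : i < n then L.get ⟨i, hi⟩ else Classical.arbitrary _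
    with hpt
  set D : ℕ → Set ↥CharSpace := fun i => if hi : i < n then C (L.get ⟨i, hi⟩) else ∅ with hD
  have hPex : ∀ χ : ↥CharSpace, ∃ i, i < n ∧ χ ∈ D i := by
    intro χ
    obtain ⟨x, hxs, hχx⟩ := Set.mem_iUnion₂.1 (hs (Set.mem_univ χ))
    obtain ⟨i, hi⟩ := List.mem_iff_get.1 (Finset.mem_toList.2 hxs)
    refine ⟨(i : ℕ), i.2, ?_⟩
    rw [hD]
    simp only [show (i : ℕ) < n from i.2, dif_pos]
    rw [show L.get ⟨(i : ℕ), i.2⟩ = L.get i from rfl, hi]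
    exact hχx
  set idx : ↥CharSpace → ℕ := fun χ => Nat.find (hPex χ) with hidx
  set g0 : ↥CharSpace → ℂ := fun χ => h (pt (idx χ)) with hg0
  have hloc : IsLocallyConstant g0 := by
    rw [IsLocallyConstant.iff_exists_open]
    intro χ
    obtain ⟨hlt, hmem⟩ := Nat.find_spec (hPex χ)
    refine ⟨D (idx χ) ∩ ⋂ j ∈ Finset.range (idx χ), (D j)ᶜ, ?_, ?_, ?_⟩
    · apply IsOpen.inter
      · rw [hD]; simp only [hidx, hlt, dif_pos]; exact (hCclop _).2
      · apply isOpen_biInter_finset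
        intro j hj
        rw [hD]
        by_cases hjn : j < n
        · simp only [hjn, dif_pos]; exact (hCclop _).1.isOpen_compl
        · simp only [hjn, dif_neg]; simp
    · refine ⟨hmem, ?_⟩
      simp only [Set.mem_iInter, Set.mem_compl_iff]
      intro j hj hmemj
      exact Nat.find_min (hPex χ) (Finset.mem_range.1 hj)
        ⟨lt_trans (Finset.mem_range.1 hj) hlt, hmemj⟩
    · intro y hy
      obtain ⟨hy1, hy2⟩ := hy
      simp only [Set.mem_iInter, Set.mem_compl_iff] at hy2
      have hidxy : idx y = idx χ := by
        apply le_antisymm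
        · exact Nat.find_le ⟨hlt, hy1⟩
        · by_contra hlt2
          push_neg at hlt2
          obtain ⟨hlt3, hmem3⟩ := Nat.find_spec (hPex y)
          exact hy2 (idx y) (Finset.mem_range.2 hlt2) hmem3
      rw [hg0]
      simp only [hidxy]
  set g : C(↥CharSpace, ℂ) := ⟨g0, hloc.continuous⟩ with hg
  refine ⟨g, ?_, ?_⟩
  · have hsub : Set.range ⇑g ⊆ (fun i => h (pt i)) '' (Set.Iio n ∪ {0}) := by
      rintro _ ⟨χ, rfl⟩
      obtain ⟨hlt, _⟩ := Nat.find_spec (hPex χ)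
      exact ⟨idx χ, Or.inl hlt, rfl⟩
    exact Set.Finite.subset (Set.Finite.image _ ((Set.finite_Iio n).union (Set.finite_singleton 0))) hsub
  · rw [ContinuousMap.norm_le _ (le_of_lt hε)]
    intro χ
    obtain ⟨hlt, hmem⟩ := Nat.find_spec (hPex χ)
    have hmem2 : χ ∈ C (pt (idx χ)) := by
      simp only [hD, hlt, dif_pos] at hmem
      simp only [hpt, hidx, hlt, dif_pos]
      exact hmem
    have hball := hCsub (pt (idx χ)) hmem2
    simp only [Set.mem_preimage, Metric.mem_ball] at hball
    show ‖h χ - g0 χ‖ ≤ ε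
    rw [hg0]
    have : dist (h χ) (h (pt (idx χ))) < ε := hball
    rw [dist_eq_norm] at this
    exact le_of_lt this

lemma dense_of_td (htd : TotallyDisconnectedSpace ↥CharSpace) :
    {f : BCF | AE ⇑f = 0} =
      closure {f : BCF | AE ⇑f = 0 ∧ (Set.range ⇑f).Finite} := by
  apply Set.Subset.antisymm
  · intro f hf
    rw [Metric.mem_closure_iff]
    intro ε hε
    set fE : E0sub := ⟨f, hf⟩ with hfE
    obtain ⟨g, hfin, hnorm⟩ := exists_finite_range_approx (Gel fE) (half_pos hε)
    obtain ⟨sE, hsE⟩ := Gel_surjective g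
    refine ⟨(sE : BCF), ⟨sE.2, ?_⟩, ?_⟩
    · apply Set.Finite.subset hfin
      rintro _ ⟨k, rfl⟩
      refine ⟨⟨evE k, evE_mem k⟩, ?_⟩
      rw [← hsE]
      rfl
    · rw [dist_eq_norm]
      calc ‖f - (sE : BCF)‖ = ‖(fE : BCF) - (sE : BCF)‖ := rfl
        _ ≤ ‖Gel fE - Gel sE‖ := norm_sub_le_Gel fE sE
        _ = ‖Gel fE - g‖ := by rw [hsE]
        _ ≤ ε / 2 := hnorm
        _ < ε := half_lt_self hε
  · have hsub : {f : BCF | AE ⇑f = 0 ∧ (Set.range ⇑f).Finite} ⊆ {f : BCF | AE ⇑f = 0} :=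
      fun f hf => hf.1
    calc closure {f : BCF | AE ⇑f = 0 ∧ (Set.range ⇑f).Finite}
        ⊆ closure {f : BCF | AE ⇑f = 0} := closure_mono hsub
      _ = {f : BCF | AE ⇑f = 0} := E0_isClosed.closure_eq

end Approx
end Anqie


/-- Let `F₀(ℕ)` be the set of bounded arithmetic functions with
zero anqie entropy and finite range. The character space `E₀(ℕ)` of `E₀` is
totally disconnected if and only if `E₀` is the sup-norm closure of `F₀(ℕ)`. -/
theorem totally_disconnected_iff_finite_range_dense :
    TotallyDisconnectedSpace ↥Anqie.CharSpace ↔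
      {f : BoundedContinuousFunction ℕ ℂ | Anqie.AE ⇑f = 0} =
        closure {f : BoundedContinuousFunction ℕ ℂ |
          Anqie.AE ⇑f = 0 ∧ (Set.range ⇑f).Finite} := by
  exact ⟨Anqie.dense_of_td, Anqie.td_of_dense⟩
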